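/- arXiv:1001.1651 — 11 statements merged into one kernel-verified Lean document; each statement's English description precedes it below -/
import Mathlib

section
/- Let (Ω, μ) be a finite measure space, ι a nonempty directed preorder, and g : ι → (Ω →ₘ[μ] ℝ) an antitone net of a.e.-equivalence classes of real-valued measurable functions (with the a.e. pointwise order). If 0 is the greatest lower bound of the range of g (IsGLB (Set.range g) 0), then g converges to 0 in measure μ along the atTop filter on ι; that is, for every ε > 0, μ {ω | ε ≤ |g i ω|} tends to 0 along atTop. -/
open MeasureTheory Filter Topology

/-- If `(Ω, μ)` is a finite measure space, `ι` a nonempty directed preorder, and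
`g : ι → (Ω →ₘ[μ] ℝ)` an antitone net with greatest lower bound `0`, then `g`
converges to `0` in measure along `atTop`. -/
theorem antitone_isGLB_zero_tendstoInMeasure
    {Ω : Type*} [MeasurableSpace Ω] {μ : Measure Ω} [IsFiniteMeasure μ]
    {ι : Type*} [Preorder ι] [Nonempty ι] [IsDirected ι (· ≤ ·)]
    (g : ι → Ω →ₘ[μ] ℝ) (hg : Antitone g) (h0 : IsGLB (Set.range g) 0) :
    TendstoInMeasure μ (fun i => ⇑(g i)) atTop 0 := by
  classical
  have hdir : ∀ a b : ι, ∃ c, a ≤ c ∧ b ≤ c := fun a b => directed_of (· ≤ ·) a b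
  -- measurable representatives
  set F : ι → Ω → ℝ := fun i => ((g i).aemeasurable.mk _) with hF
  have hFmeas : ∀ i, Measurable (F i) := fun i => (g i).aemeasurable.measurable_mk
  have hFeq : ∀ i, ⇑(g i) =ᵐ[μ] F i := fun i => (g i).aemeasurable.ae_eq_mk
  have hFpos : ∀ i, ∀ᵐ ω ∂μ, 0 ≤ F i ω := by
    intro i
    have hle : (0 : Ω →ₘ[μ] ℝ) ≤ g i := h0.1 ⟨i, rfl⟩
    filter_upwards [AEEqFun.coeFn_le.mpr hle, hFeq i, AEEqFun.coeFn_zero (β := ℝ) (μ := μ)]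
      with ω h1 h2 h3
    rw [← h2]; rw [h3] at h1; exact h1
  have hFanti : ∀ ⦃i j : ι⦄, i ≤ j → F j ≤ᵐ[μ] F i := by
    intro i j hij
    filter_upwards [AEEqFun.coeFn_le.mpr (hg hij), hFeq i, hFeq j] with ω h1 h2 h3
    rw [← h2, ← h3]; exact h1
  rw [tendstoInMeasure_iff_dist]
  intro ε hε
  -- truncated functions and their integrals
  set ψ : ι → Ω → ENNReal := fun i ω => ENNReal.ofReal (min (F i ω) ε) with hψ
  have hψmeas : ∀ i, Measurable (ψ i) := fun i =>
    ENNReal.measurable_ofReal.comp ((hFmeas i).min measurable_const)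
  have hψle : ∀ i ω, ψ i ω ≤ ENNReal.ofReal ε := fun i ω =>
    ENNReal.ofReal_le_ofReal (min_le_right _ _)
  set I : ι → ENNReal := fun i => ∫⁻ ω, ψ i ω ∂μ with hI
  have hIfin : ∀ i, I i ≠ ⊤ := by
    intro i
    have : I i ≤ ENNReal.ofReal ε * μ Set.univ := by
      calc I i ≤ ∫⁻ _ , ENNReal.ofReal ε ∂μ := lintegral_mono fun ω => hψle i ω
        _ = ENNReal.ofReal ε * μ Set.univ := lintegral_const _
    exact ne_top_of_le_ne_top (ENNReal.mul_ne_top ENNReal.ofReal_ne_top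
      (measure_ne_top μ _)) this
  have hψanti : ∀ ⦃i j : ι⦄, i ≤ j → ψ j ≤ᵐ[μ] ψ i := by
    intro i j hij
    filter_upwards [hFanti hij] with ω h
    exact ENNReal.ofReal_le_ofReal (min_le_min_right _ h)
  have hIanti : Antitone I := fun i j hij => lintegral_mono_ae (hψanti hij)
  set c : ENNReal := ⨅ i, I i with hc
  have hcfin : c ≠ ⊤ := ne_top_of_le_ne_top (hIfin (Classical.arbitrary ι)) (iInf_le _ _)
  have hcle : ∀ i, c ≤ I i := fun i => iInf_le _ _
  -- a sequence (almost) realizing the infimum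
  have hseq : ∀ n : ℕ, ∃ i, I i < c + (n : ENNReal)⁻¹ := by
    intro n
    have : c < c + (n : ENNReal)⁻¹ :=
      ENNReal.lt_add_right hcfin (by simp)
    exact iInf_lt_iff.mp this
  choose j hj using hseq
  -- upgrade it to a monotone sequence
  set k : ℕ → ι := fun n => Nat.rec (j 0) (fun n kn => (hdir kn (j (n + 1))).choose) n with hk
  have hk_succ : ∀ n, k n ≤ k (n + 1) ∧ j (n + 1) ≤ k (n + 1) := fun n =>
    (hdir (k n) (j (n + 1))).choose_spec
  have hkmono : Monotone k := monotone_nat_of_le_succ fun n => (hk_succ n).1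
  have hkj : ∀ n, j n ≤ k n := fun n => Nat.casesOn n le_rfl fun m => (hk_succ m).2
  have hkI : ∀ n, I (k n) < c + (n : ENNReal)⁻¹ := fun n =>
    lt_of_le_of_lt (hIanti (hkj n)) (hj n)
  -- the infimum along the sequence is still `c`
  have hkc : (⨅ n, I (k n)) = c := by
    refine le_antisymm ?_ (le_iInf fun n => hcle _)
    refine ENNReal.le_of_forall_pos_le_add fun δ hδ _ => ?_
    obtain ⟨n, hn⟩ := ENNReal.exists_inv_nat_lt (a := (δ : ENNReal))
      (by exact_mod_cast hδ.ne')
    exact (iInf_le _ n).trans ((hkI n).le.trans (add_le_add le_rfl hn.le))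
  -- the a.e. infimum along the sequence
  set H : Ω → ENNReal := fun ω => ⨅ n, ψ (k n) ω with hH
  have hHmeas : Measurable H := Measurable.iInf fun n => hψmeas (k n)
  have hHint : ∫⁻ ω, H ω ∂μ = c := by
    rw [hH]
    rw [lintegral_iInf_ae (fun n => hψmeas (k n))
      (fun n => hψanti (hkmono n.le_succ)) (hIfin (k 0))]
    exact hkc
  have hHle : ∀ ω, H ω ≤ ENNReal.ofReal ε := fun ω => (iInf_le _ 0).trans (hψle _ ω)
  -- `H` is (a.e.) below every `ψ i`
  have hHpsi : ∀ i, H ≤ᵐ[μ] ψ i := by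
    intro i
    set m : ℕ → ι := fun n =>
      Nat.rec (hdir (k 0) i).choose (fun n mn => (hdir mn (k (n + 1))).choose) n with hm
    have hm0 : k 0 ≤ m 0 ∧ i ≤ m 0 := (hdir (k 0) i).choose_spec
    have hm_succ : ∀ n, m n ≤ m (n + 1) ∧ k (n + 1) ≤ m (n + 1) := fun n =>
      (hdir (m n) (k (n + 1))).choose_spec
    have hmk : ∀ n, k n ≤ m n := fun n => Nat.casesOn n hm0.1 fun p => (hm_succ p).2
    have hmi : i ≤ m 0 := hm0.2
    set H' : Ω → ENNReal := fun ω => ⨅ n, ψ (m n) ω with hH'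
    have hH'int : ∫⁻ ω, H' ω ∂μ = ⨅ n, I (m n) := by
      rw [hH']
      exact lintegral_iInf_ae (fun n => hψmeas (m n))
        (fun n => hψanti (hm_succ n).1) (hIfin (m 0))
    have hcH' : ∫⁻ ω, H ω ∂μ ≤ ∫⁻ ω, H' ω ∂μ := by
      rw [hHint, hH'int]; exact le_iInf fun n => hcle _
    have hH'H : H' ≤ᵐ[μ] H := by
      have : ∀ᵐ ω ∂μ, ∀ n, ψ (m n) ω ≤ ψ (k n) ω :=
        (ae_all_iff).mpr fun n => hψanti (hmk n)
      filter_upwards [this] with ω hω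
      exact iInf_mono hω
    have hH'fin : ∫⁻ ω, H' ω ∂μ ≠ ⊤ :=
      ne_top_of_le_ne_top (hIfin (m 0)) (by rw [hH'int]; exact iInf_le _ 0)
    have heq : H' =ᵐ[μ] H :=
      ae_eq_of_ae_le_of_lintegral_le hH'H hH'fin hHmeas.aemeasurable hcH'
    filter_upwards [heq, hψanti hmi] with ω h1 h2
    calc H ω = H' ω := h1.symm
      _ ≤ ψ (m 0) ω := iInf_le _ 0
      _ ≤ ψ i ω := h2
  -- the real-valued version of `H` is a lower bound of the range of `g`
  set Hr : Ω → ℝ := fun ω => (H ω).toReal with hHr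
  have hHrsm : AEStronglyMeasurable Hr μ :=
    (hHmeas.ennreal_toReal).aestronglyMeasurable
  have hHrle : ∀ i, Hr ≤ᵐ[μ] ⇑(g i) := by
    intro i
    filter_upwards [hHpsi i, hFeq i, hFpos i] with ω h1 h2 h3
    have hne : ψ i ω ≠ ⊤ := ne_top_of_le_ne_top ENNReal.ofReal_ne_top (hψle i ω)
    calc Hr ω = (H ω).toReal := rfl
      _ ≤ (ψ i ω).toReal := ENNReal.toReal_mono hne h1
      _ = min (F i ω) ε := ENNReal.toReal_ofReal (le_min h3 hε.le)
      _ ≤ F i ω := min_le_left _ _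
      _ = (g i) ω := h2.symm
  have hmk_lb : (AEEqFun.mk Hr hHrsm) ∈ lowerBounds (Set.range g) := by
    rintro b ⟨i, rfl⟩
    refine AEEqFun.coeFn_le.mp ?_
    filter_upwards [AEEqFun.coeFn_mk Hr hHrsm, hHrle i] with ω h1 h2
    rw [h1]; exact h2
  have hmk0 : (AEEqFun.mk Hr hHrsm) ≤ 0 := h0.2 hmk_lb
  -- hence `H = 0` a.e. and `c = 0`
  have hH0 : H =ᵐ[μ] 0 := by
    filter_upwards [AEEqFun.coeFn_le.mpr hmk0, AEEqFun.coeFn_mk Hr hHrsm,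
      AEEqFun.coeFn_zero (β := ℝ) (μ := μ)] with ω h1 h2 h3
    rw [h2, h3] at h1
    have hr0 : (H ω).toReal = 0 := le_antisymm h1 ENNReal.toReal_nonneg
    have hne : H ω ≠ ⊤ := ne_top_of_le_ne_top ENNReal.ofReal_ne_top (hHle ω)
    simpa [hne] using (ENNReal.toReal_eq_zero_iff _).mp hr0
  have hc0 : c = 0 := by
    rw [← hHint]
    rw [lintegral_congr_ae hH0]
    simp
  -- finish: Markov's inequality and the monotone convergence of `I` to `c = 0`
  have hItendsto : Tendsto I atTop (𝓝 0) := by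
    have := tendsto_atTop_iInf hIanti
    rwa [← hc, hc0] at this
  have hbound : ∀ i, μ {ω | ε ≤ dist ((g i) ω) ((0 : Ω → ℝ) ω)} ≤ I i / ENNReal.ofReal ε := by
    intro i
    have hsub : {ω | ε ≤ dist ((g i) ω) ((0 : Ω → ℝ) ω)} ≤ᵐ[μ]
        {ω | ENNReal.ofReal ε ≤ ψ i ω} := by
      filter_upwards [hFeq i, hFpos i] with ω h1 h2
      intro hω
      have hω' : ε ≤ |(g i) ω| := by
        simpa [Pi.zero_apply, dist_zero_right, Real.norm_eq_abs] using
          (show ε ≤ dist ((g i) ω) ((0 : Ω → ℝ) ω) from hω)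
      have hεF : ε ≤ F i ω := by
        rw [h1] at hω'; rwa [abs_of_nonneg h2] at hω'
      have hmin : min (F i ω) ε = ε := min_eq_right hεF
      show ENNReal.ofReal ε ≤ ψ i ω
      rw [hψ]
      simp only [hmin]
      exact le_rfl
    calc μ {ω | ε ≤ dist ((g i) ω) ((0 : Ω → ℝ) ω)}
        ≤ μ {ω | ENNReal.ofReal ε ≤ ψ i ω} := measure_mono_ae hsub
      _ ≤ I i / ENNReal.ofReal ε :=
          meas_ge_le_lintegral_div (hψmeas i).aemeasurable
            (ENNReal.ofReal_pos.mpr hε).ne' ENNReal.ofReal_ne_top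
  have hdiv : Tendsto (fun i => I i / ENNReal.ofReal ε) atTop (𝓝 0) := by
    have := ENNReal.Tendsto.div_const hItendsto (Or.inr (ENNReal.ofReal_pos.mpr hε).ne')
    simpa using this
  exact tendsto_of_tendsto_of_tendsto_of_le_of_le tendsto_const_nhds hdiv
    (fun i => by simp) hbound
end

section
/- Let (Ω, μ) be a measure space, ι a nonempty directed preorder, and f, g : ι → (Ω →ₘ[μ] ℝ) nets of a.e.-equivalence classes of real-valued measurable functions such that g is antitone, 0 is the greatest lower bound of the range of g in the a.e. order (IsGLB (Set.range g) 0), and |f i| ≤ g i a.e. for every i ∈ ι. Then for every measurable set B with μ B < ∞, the net f converges to 0 in measure with respect to the restricted measure μ.restrict B, along the atTop filter on ι. -/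
open MeasureTheory Filter Topology
open scoped ENNReal

/-- If `g : ι → (Ω →ₘ[μ] ℝ)` is an antitone net with greatest lower bound `0` and
`|f i| ≤ g i` a.e. for every `i`, then `f` converges to `0` in measure on every
measurable set of finite measure (Proposition 1 of the paper, commutative case). -/
theorem tendstoInMeasure_restrict_of_order_dominated
    {Ω : Type*} [MeasurableSpace Ω] {μ : Measure Ω}
    {ι : Type*} [Preorder ι] [Nonempty ι] [IsDirected ι (· ≤ ·)]
    (f g : ι → Ω →ₘ[μ] ℝ) (hg : Antitone g) (h0 : IsGLB (Set.range g) 0)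
    (hfg : ∀ i, ∀ᵐ ω ∂μ, |f i ω| ≤ g i ω) :
    ∀ B : Set Ω, MeasurableSet B → μ B < ∞ →
      TendstoInMeasure (μ.restrict B) (fun i => ⇑(f i)) atTop 0 := by
  intro B hB hBfin
  rw [tendstoInMeasure_iff_dist]
  intro ε hε
  have hgmeas : ∀ i, Measurable (g i : Ω → ℝ) := fun i => (g i).measurable
  have hge0 : ∀ i, ∀ᵐ ω ∂μ, (0 : ℝ) ≤ g i ω := by
    intro i
    have h1 : (0 : Ω →ₘ[μ] ℝ) ≤ g i := h0.1 ⟨i, rfl⟩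
    filter_upwards [AEEqFun.coeFn_le.mpr h1, AEEqFun.coeFn_zero (α := Ω) (μ := μ) (β := ℝ)]
      with ω h2 h3
    simp only [Pi.zero_apply] at h3
    rw [← h3]; exact h2
  set A : ι → Set Ω := fun i => B ∩ {ω | ε ≤ (g i : Ω → ℝ) ω} with hA
  have hAmeas : ∀ i, MeasurableSet (A i) :=
    fun i => hB.inter (measurableSet_le measurable_const (hgmeas i))
  set m : ι → ℝ≥0∞ := fun i => μ (A i) with hm
  have hmfin : ∀ i, m i ≠ ∞ := fun i =>
    (lt_of_le_of_lt (measure_mono Set.inter_subset_left) hBfin).ne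
  have hAae : ∀ {i j : ι}, i ≤ j → ∀ᵐ ω ∂μ, ω ∈ A j → ω ∈ A i := by
    intro i j hij
    filter_upwards [AEEqFun.coeFn_le.mpr (hg hij)] with ω hω hmem
    exact ⟨hmem.1, le_trans hmem.2 hω⟩
  have hmanti : ∀ {i j : ι}, i ≤ j → m j ≤ m i := fun {i j} hij =>
    measure_mono_ae (hAae hij)
  -- Key step: the measures `m i` get arbitrarily small.
  have hkey : ∀ δ : ℝ≥0∞, 0 < δ → ∃ i, m i ≤ δ := by
    intro δ hδ
    by_contra hcon
    push_neg at hcon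
    set t : ℝ≥0∞ := ⨅ i, m i with ht
    have htδ : δ ≤ t := le_iInf fun i => (hcon i).le
    have htfin : t ≠ ∞ :=
      (lt_of_le_of_lt (iInf_le _ (Classical.arbitrary ι))
        (lt_top_iff_ne_top.mpr (hmfin _))).ne
    have htle : ∀ i, t ≤ m i := fun i => iInf_le _ i
    -- choose an approximating sequence
    have hj : ∀ n : ℕ, ∃ i, m i < t + ((n : ℝ≥0∞) + 1)⁻¹ := by
      intro n
      have hpos : ((n : ℝ≥0∞) + 1)⁻¹ ≠ 0 := by
        simp [ENNReal.inv_ne_zero]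
      have h1 : t < t + ((n : ℝ≥0∞) + 1)⁻¹ := ENNReal.lt_add_right htfin hpos
      rw [ht] at h1
      exact iInf_lt_iff.mp h1
    choose j hjlt using hj
    -- build a monotone sequence dominating j
    have hdir : ∀ a b : ι, ∃ c, a ≤ c ∧ b ≤ c := fun a b => exists_ge_ge a b
    choose ub hub₁ hub₂ using hdir
    let seq : ℕ → ι := fun n => Nat.rec (j 0) (fun k p => ub p (j (k + 1))) n
    have hseq_succ : ∀ n, seq (n + 1) = ub (seq n) (j (n + 1)) := fun n => rfl
    have hseq_mono : Monotone seq := by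
      apply monotone_nat_of_le_succ
      intro n; rw [hseq_succ]; exact hub₁ _ _
    have hseq_ge : ∀ n, j n ≤ seq n := by
      intro n
      cases n with
      | zero => exact le_rfl
      | succ k => rw [hseq_succ]; exact hub₂ _ _
    have hmseq_lt : ∀ n, m (seq n) < t + ((n : ℝ≥0∞) + 1)⁻¹ :=
      fun n => lt_of_le_of_lt (hmanti (hseq_ge n)) (hjlt n)
    -- the decreasing truncations
    set S : ℕ → Set Ω := fun n => ⋂ k ∈ Finset.range (n + 1), A (seq k) with hS
    have hSmeas : ∀ n, MeasurableSet (S n) :=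
      fun n => Finset.measurableSet_biInter _ (fun k _ => hAmeas (seq k))
    have hS_anti : Antitone S := by
      apply antitone_nat_of_succ_le
      intro n x hx
      simp only [hS, Set.mem_iInter, Finset.mem_range] at hx ⊢
      intro k hk
      exact hx k (by omega)
    have hS_sub : ∀ n, S n ⊆ A (seq n) := by
      intro n x hx
      simp only [hS, Set.mem_iInter, Finset.mem_range] at hx
      exact hx n (by omega)
    have hS_eq : ∀ n, μ (S n) = m (seq n) := by
      intro n
      refine le_antisymm (measure_mono (hS_sub n)) (measure_mono_ae ?_)
      have hball : ∀ᵐ ω ∂μ, ∀ k : Fin (n + 1), ω ∈ A (seq n) → ω ∈ A (seq k) := by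
        rw [ae_all_iff]
        intro k
        exact hAae (hseq_mono (by omega))
      filter_upwards [hball] with ω hω hmem
      exact Set.mem_iInter₂.mpr fun k hk => hω ⟨k, Finset.mem_range.mp hk⟩ hmem
    set Aset : Set Ω := ⋂ n, S n with hAset
    have hAsetMeas : MeasurableSet Aset := MeasurableSet.iInter hSmeas
    -- limit of (n+1)⁻¹ is 0
    have hinv0 : Tendsto (fun n : ℕ => ((n : ℝ≥0∞) + 1)⁻¹) atTop (𝓝 0) := by
      have h2 := ENNReal.tendsto_inv_nat_nhds_zero.comp (tendsto_add_atTop_nat 1)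
      have heq : (fun n : ℕ => ((n : ℝ≥0∞) + 1)⁻¹)
          = (fun n : ℕ => ((n : ℝ≥0∞))⁻¹) ∘ (fun n => n + 1) := by
        funext n
        simp [Function.comp]
      rw [heq]
      exact h2
    -- measure of the intersection is t
    have hTT : Tendsto (fun n => μ (S n)) atTop (𝓝 (μ Aset)) :=
      tendsto_measure_iInter_atTop (fun n => (hSmeas n).nullMeasurableSet) hS_anti
        ⟨0, by rw [hS_eq 0]; exact hmfin _⟩
    have hTT' : Tendsto (fun n => μ (S n)) atTop (𝓝 t) := by
      have hup : Tendsto (fun n : ℕ => t + ((n : ℝ≥0∞) + 1)⁻¹) atTop (𝓝 t) := by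
        have := Tendsto.add (tendsto_const_nhds (x := t) (f := atTop (α := ℕ))) hinv0
        simpa using this
      refine tendsto_of_tendsto_of_tendsto_of_le_of_le tendsto_const_nhds hup ?_ ?_
      · intro n; simpa [hS_eq n] using htle (seq n)
      · intro n; simpa [hS_eq n] using (hmseq_lt n).le
    have hμAset : μ Aset = t := tendsto_nhds_unique hTT hTT'
    -- Aset is a.e. contained in every A i
    have hAsub : ∀ i, μ (Aset \ A i) = 0 := by
      intro i
      have hbound : ∀ n : ℕ, μ (Aset \ A i) ≤ ((n : ℝ≥0∞) + 1)⁻¹ := by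
        intro n
        obtain ⟨k, hk₁, hk₂⟩ := exists_ge_ge (seq n) i
        -- μ (A (seq n) \ A k) ≤ (n+1)⁻¹
        have hsplit : μ (A (seq n) ∩ A k) + μ (A (seq n) \ A k) = m (seq n) :=
          measure_inter_add_diff _ (hAmeas k)
        have hinter : μ (A (seq n) ∩ A k) = m k := by
          refine le_antisymm (measure_mono Set.inter_subset_right) (measure_mono_ae ?_)
          filter_upwards [hAae hk₁] with ω hω hmem
          exact ⟨hω hmem, hmem⟩
        have hdiff : μ (A (seq n) \ A k) ≤ ((n : ℝ≥0∞) + 1)⁻¹ := by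
          have h1 : m k + μ (A (seq n) \ A k) ≤ m k + ((n : ℝ≥0∞) + 1)⁻¹ := by
            rw [← hinter, hsplit]
            exact le_trans (hmseq_lt n).le
              (add_le_add_left (le_trans (htle k) (le_of_eq hinter.symm)) _)
          exact (ENNReal.add_le_add_iff_left (hmfin k)).mp h1
        -- Aset \ A i ⊆ (A (seq n) \ A k) ∪ (A k \ A i) a.e.
        have hnull : μ (A k \ A i) = 0 := by
          rw [measure_eq_zero_iff_ae_notMem]
          filter_upwards [hAae hk₂] with ω hω
          intro hmem
          exact hmem.2 (hω hmem.1)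
        calc μ (Aset \ A i) ≤ μ ((A (seq n) \ A k) ∪ (A k \ A i)) := by
              apply measure_mono
              intro x hx
              by_cases hxk : x ∈ A k
              · exact Or.inr ⟨hxk, hx.2⟩
              · exact Or.inl ⟨hS_sub n (Set.mem_iInter.mp hx.1 n), hxk⟩
          _ ≤ μ (A (seq n) \ A k) + μ (A k \ A i) := measure_union_le _ _
          _ ≤ ((n : ℝ≥0∞) + 1)⁻¹ + 0 := add_le_add hdiff hnull.le
          _ = ((n : ℝ≥0∞) + 1)⁻¹ := add_zero _
      have := ge_of_tendsto hinv0 (Eventually.of_forall hbound)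
      exact le_antisymm this zero_le
    -- the indicator of Aset is a lower bound of range g
    set hfun : Ω → ℝ := Aset.indicator (fun _ => ε) with hfundef
    have hfunmeas : Measurable hfun := measurable_const.indicator hAsetMeas
    set h : Ω →ₘ[μ] ℝ := AEEqFun.mk hfun hfunmeas.aestronglyMeasurable with hhdef
    have hlb : h ∈ lowerBounds (Set.range g) := by
      rintro _ ⟨i, rfl⟩
      rw [← AEEqFun.coeFn_le]
      have hsub : ∀ᵐ ω ∂μ, ω ∈ Aset → ε ≤ (g i : Ω → ℝ) ω := by
        have : ∀ᵐ ω ∂μ, ω ∉ Aset \ A i := (measure_eq_zero_iff_ae_notMem.mp (hAsub i))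
        filter_upwards [this] with ω hω hmem
        by_cases hωA : ω ∈ A i
        · exact hωA.2
        · exact absurd ⟨hmem, hωA⟩ hω
      filter_upwards [AEEqFun.coeFn_mk hfun hfunmeas.aestronglyMeasurable, hsub, hge0 i]
        with ω h1 h2 h3
      rw [h1, hfundef]
      by_cases hω : ω ∈ Aset
      · rw [Set.indicator_of_mem hω]; exact h2 hω
      · rw [Set.indicator_of_notMem hω]; exact h3
    have hle0 : h ≤ 0 := h0.2 hlb
    have hae : ∀ᵐ ω ∂μ, hfun ω ≤ 0 := by
      filter_upwards [AEEqFun.coeFn_le.mpr hle0,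
        AEEqFun.coeFn_mk hfun hfunmeas.aestronglyMeasurable,
        AEEqFun.coeFn_zero (α := Ω) (μ := μ) (β := ℝ)] with ω h1 h2 h3
      rw [← h2]
      rw [h3] at h1
      exact h1
    have hAset0 : μ Aset = 0 := by
      have hsub : ∀ᵐ ω ∂μ, ω ∉ Aset := by
        filter_upwards [hae] with ω h1
        intro hmem
        rw [hfundef, Set.indicator_of_mem hmem] at h1
        exact absurd h1 (not_le.mpr hε)
      exact measure_eq_zero_iff_ae_notMem.mpr hsub
    rw [hμAset] at hAset0
    exact absurd (hAset0 ▸ htδ) (not_le.mpr hδ)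
  -- Conclusion
  rw [ENNReal.tendsto_nhds_zero]
  intro δ hδ
  obtain ⟨i₀, hi₀⟩ := hkey δ hδ
  filter_upwards [eventually_ge_atTop i₀] with i hi
  have hset : MeasurableSet {x | ε ≤ dist (f i x) ((0 : Ω → ℝ) x)} := by
    simp only [Pi.zero_apply, Real.dist_eq, sub_zero]
    exact measurableSet_le measurable_const (f i).measurable.abs
  rw [Measure.restrict_apply hset]
  have hle : μ ({x | ε ≤ dist (f i x) ((0 : Ω → ℝ) x)} ∩ B) ≤ m i := by
    apply measure_mono_ae
    filter_upwards [hfg i] with ω hω hmem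
    refine ⟨hmem.2, ?_⟩
    have : ε ≤ |f i ω| := by
      have := hmem.1
      simpa [Real.dist_eq] using this
    exact le_trans this hω
  exact le_trans hle (le_trans (hmanti hi) hi₀)
end

section
/- Let (Ω, μ) be a σ-finite measure space and (f_n) a sequence of real-valued measurable functions on Ω such that for every measurable set B with μ B < ∞, f_n converges to 0 in measure with respect to μ.restrict B. Then there exist a strictly monotone map k ↦ n_k and a sequence (R_k) of nonnegative real-valued measurable functions such that R_{k+1} ≤ R_k a.e. for every k, R_k → 0 a.e. as k → ∞, and |f_{n_k}| ≤ R_k a.e. for every k. In other words, some subsequence of (f_n) order-converges to 0. -/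
open MeasureTheory Filter Topology
open scoped ENNReal

/-- On a σ-finite measure space, if a sequence of measurable functions converges to `0`
in measure on every set of finite measure, then some subsequence `(f (n k))`
order-converges to `0`: it is dominated by an a.e.-decreasing sequence of nonnegative
measurable functions converging to `0` a.e. (Proposition 2.3 of the paper,
commutative case). -/
theorem exists_subseq_order_tendsto_zero_of_tendstoInMeasure_restrict
    {Ω : Type*} [MeasurableSpace Ω] {μ : Measure Ω} [SigmaFinite μ]
    (f : ℕ → Ω → ℝ) (hf : ∀ n, Measurable (f n))
    (hconv : ∀ B : Set Ω, MeasurableSet B → μ B < ∞ →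
      TendstoInMeasure (μ.restrict B) f atTop 0) :
    ∃ n : ℕ → ℕ, StrictMono n ∧
      ∃ R : ℕ → Ω → ℝ, (∀ k, Measurable (R k)) ∧ (∀ k ω, 0 ≤ R k ω) ∧
        (∀ k, ∀ᵐ ω ∂μ, R (k + 1) ω ≤ R k ω) ∧
        (∀ᵐ ω ∂μ, Tendsto (fun k => R k ω) atTop (𝓝 0)) ∧
        (∀ k, ∀ᵐ ω ∂μ, |f (n k) ω| ≤ R k ω) := by
  have hpos : ∀ k : ℕ, (0:ℝ≥0∞) < 2⁻¹ ^ k :=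
    fun k => ENNReal.pow_pos (ENNReal.inv_pos.mpr ENNReal.ofNat_ne_top) k
  have hstep : ∀ k : ℕ, ∀ᶠ i in atTop,
      μ.restrict (spanningSets μ k) {x | (1/2:ℝ)^k ≤ |f i x|} < (2:ℝ≥0∞)⁻¹ ^ k := by
    intro k
    have h := (tendstoInMeasure_iff_dist.mp (hconv (spanningSets μ k) (measurableSet_spanningSets μ k)
      (measure_spanningSets_lt_top μ k))) ((1/2:ℝ)^k) (by positivity)
    have h' : Tendsto (fun i => μ.restrict (spanningSets μ k) {x | (1/2:ℝ)^k ≤ |f i x|})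
        atTop (𝓝 0) := by
      simpa [Real.dist_eq] using h
    exact h'.eventually (gt_mem_nhds (hpos k))
  obtain ⟨n, hn, hP⟩ := Filter.extraction_forall_of_eventually hstep
  refine ⟨n, hn, ?_⟩
  set s : ℕ → Set Ω := fun k => {x | (1/2:ℝ)^k ≤ |f (n k) x|} ∩ spanningSets μ k with hs
  have hsmeas : ∀ k, μ (s k) < (2:ℝ≥0∞)⁻¹ ^ k := by
    intro k
    have := hP k
    rwa [Measure.restrict_apply' (measurableSet_spanningSets μ k)] at this
  have hsum : ∑' k, μ (s k) ≠ ⊤ := by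
    refine ne_top_of_le_ne_top ?_ (ENNReal.tsum_le_tsum fun k => (hsmeas k).le)
    rw [ENNReal.tsum_geometric]
    simp [ENNReal.one_sub_inv_two]
  have hae := MeasureTheory.ae_eventually_notMem hsum
  -- a.e. convergence of the subsequence
  have haecv : ∀ᵐ ω ∂μ, Tendsto (fun k => f (n k) ω) atTop (𝓝 0) := by
    filter_upwards [hae] with ω hω
    obtain ⟨m, hm⟩ : ∃ m, ω ∈ spanningSets μ m := by
      have : ω ∈ ⋃ i, spanningSets μ i := by
        rw [iUnion_spanningSets]; trivial
      exact Set.mem_iUnion.mp this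
    have hbound : ∀ᶠ k in atTop, ‖f (n k) ω‖ ≤ (1/2:ℝ)^k := by
      filter_upwards [hω, eventually_ge_atTop m] with k hk1 hk2
      have hmem : ω ∈ spanningSets μ k := monotone_spanningSets μ hk2 hm
      have : ¬ ((1/2:ℝ)^k ≤ |f (n k) ω|) := fun h => hk1 ⟨h, hmem⟩
      simpa [Real.norm_eq_abs] using (not_le.mp this).le
    exact squeeze_zero_norm' hbound
      (tendsto_pow_atTop_nhds_zero_of_lt_one (by norm_num) (by norm_num))
  -- the dominating sequence
  set T : ℕ → Ω → ℝ≥0∞ := fun k ω => ⨆ j, (‖f (n (j + k)) ω‖₊ : ℝ≥0∞) with hT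
  refine ⟨fun k ω => (T k ω).toReal, ?_, fun k ω => ENNReal.toReal_nonneg, ?_, ?_, ?_⟩
  · intro k
    exact (Measurable.iSup fun j => (hf (n (j + k))).nnnorm.coe_nnreal_ennreal).ennreal_toReal
  · -- a.e. antitone
    intro k
    filter_upwards [haecv] with ω hω
    have hfin : T k ω ≠ ⊤ := by
      obtain ⟨C, hC⟩ := hω.norm.bddAbove_range
      refine ne_top_of_le_ne_top (b := ENNReal.ofReal C) ENNReal.ofReal_ne_top ?_
      refine iSup_le fun j => ?_
      rw [← enorm_eq_nnnorm, ← ofReal_norm]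
      exact ENNReal.ofReal_le_ofReal (hC (Set.mem_range_self (j + k)))
    refine ENNReal.toReal_mono hfin ?_
    refine iSup_le fun j => ?_
    have : j + (k + 1) = (j + 1) + k := by ring
    rw [this]
    exact le_iSup (fun j => (‖f (n (j + k)) ω‖₊ : ℝ≥0∞)) (j + 1)
  · -- a.e. tendsto 0
    filter_upwards [haecv] with ω hω
    have ha : Tendsto (fun j => (‖f (n j) ω‖₊ : ℝ≥0∞)) atTop (𝓝 0) := by
      rw [← ENNReal.coe_zero]
      exact ENNReal.tendsto_coe.mpr (by simpa using hω.nnnorm)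
    have hTtend : Tendsto (fun k => T k ω) atTop (𝓝 0) := by
      rw [ENNReal.tendsto_atTop_zero]
      intro ε hε
      obtain ⟨N, hN⟩ := (ENNReal.tendsto_atTop_zero.mp ha) ε hε
      exact ⟨N, fun k hk => iSup_le fun j => hN (j + k) (le_trans hk (Nat.le_add_left k j))⟩
    simpa [Function.comp_def] using (ENNReal.tendsto_toReal (by simp)).comp hTtend
  · -- domination
    intro k
    filter_upwards [haecv] with ω hω
    have hfin : T k ω ≠ ⊤ := by
      obtain ⟨C, hC⟩ := hω.norm.bddAbove_range
      refine ne_top_of_le_ne_top (b := ENNReal.ofReal C) ENNReal.ofReal_ne_top ?_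
      refine iSup_le fun j => ?_
      rw [← enorm_eq_nnnorm, ← ofReal_norm]
      exact ENNReal.ofReal_le_ofReal (hC (Set.mem_range_self (j + k)))
    have h1 : ((‖f (n k) ω‖₊ : ℝ≥0∞)) ≤ T k ω := by
      simpa using le_iSup (fun j => (‖f (n (j + k)) ω‖₊ : ℝ≥0∞)) 0
    have := ENNReal.toReal_mono hfin h1
    simpa [Real.norm_eq_abs] using this
end

section
/- Let A be a unital C*-algebra, and let a, b ∈ A with a selfadjoint, 0 ≤ b, and −b ≤ a ≤ b. Let x := cfc (fun t : ℝ => (1 + t)^(-(1/2 : ℝ))) b be the element obtained by applying the continuous functional calculus of b to the function t ↦ (1+t)^{−1/2}. Then −1 ≤ x * a * x ≤ 1, and consequently ‖x * a * x‖ ≤ 1. -/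
open scoped NNReal Pointwise

section Aux

variable {A : Type*} [CStarAlgebra A] [PartialOrder A] [StarOrderedRing A]

/-- For a selfadjoint element between `-1` and `1`, the norm is at most `1`. -/
lemma aux_norm_le_one_of_neg_one_le_le_one {c : A} (hc : IsSelfAdjoint c)
    (h1 : -1 ≤ c) (h2 : c ≤ 1) : ‖c‖ ≤ 1 := by
  have h1' : (0 : A) ≤ c + 1 := by simpa [sub_neg_eq_add] using sub_nonneg.mpr h1
  have h2' : (0 : A) ≤ 1 - c := sub_nonneg.mpr h2
  have hs1 := (StarOrderedRing.nonneg_iff_spectrum_nonneg (R := ℝ) _).mp h1'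
  have hs2 := (StarOrderedRing.nonneg_iff_spectrum_nonneg (R := ℝ) _).mp h2'
  conv_lhs => rw [show c = cfc (id : ℝ → ℝ) c from (cfc_id ℝ c).symm]
  apply norm_cfc_le zero_le_one
  intro t ht
  have hm1 : t + 1 ∈ spectrum ℝ (c + 1) := by
    have : t + 1 ∈ spectrum ℝ c + ({1} : Set ℝ) :=
      Set.add_mem_add ht (Set.mem_singleton 1)
    rwa [spectrum.add_singleton_eq, map_one] at this
  have hm2 : 1 - t ∈ spectrum ℝ (1 - c) := by
    have : 1 - t ∈ ({1} : Set ℝ) - spectrum ℝ c :=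
      Set.sub_mem_sub (Set.mem_singleton 1) ht
    rwa [spectrum.singleton_sub_eq, map_one] at this
  have hb1 := hs1 _ hm1
  have hb2 := hs2 _ hm2
  simp only [id]
  rw [Real.norm_eq_abs, abs_le]
  constructor <;> linarith

end Aux

/-- In a unital C*-algebra, if `a` is selfadjoint, `0 ≤ b` and `-b ≤ a ≤ b`, then for
`x = (1 + b)^{-1/2}` (defined via the continuous functional calculus of `b`) one has
`-1 ≤ x * a * x ≤ 1`, hence `‖x * a * x‖ ≤ 1` (key estimate in Theorem 2.1 of the
paper). -/
theorem neg_one_le_conj_le_one_of_order_dominated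
    {A : Type*} [CStarAlgebra A] [PartialOrder A] [StarOrderedRing A]
    (a b : A) (ha : IsSelfAdjoint a) (hb : 0 ≤ b)
    (hba : -b ≤ a) (hab : a ≤ b) :
    -1 ≤ cfc (fun t : ℝ => (1 + t) ^ (-(1 / 2 : ℝ))) b * a *
        cfc (fun t : ℝ => (1 + t) ^ (-(1 / 2 : ℝ))) b ∧
      cfc (fun t : ℝ => (1 + t) ^ (-(1 / 2 : ℝ))) b * a *
        cfc (fun t : ℝ => (1 + t) ^ (-(1 / 2 : ℝ))) b ≤ 1 ∧
      ‖cfc (fun t : ℝ => (1 + t) ^ (-(1 / 2 : ℝ))) b * a *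
        cfc (fun t : ℝ => (1 + t) ^ (-(1 / 2 : ℝ))) b‖ ≤ 1 := by
  set f : ℝ → ℝ := fun t => (1 + t) ^ (-(1 / 2 : ℝ)) with hf_def
  set x : A := cfc f b with hx_def
  have hspec : ∀ t ∈ spectrum ℝ b, 0 ≤ t :=
    (StarOrderedRing.nonneg_iff_spectrum_nonneg (R := ℝ) b).mp hb
  have hcont : ContinuousOn f (spectrum ℝ b) := by
    apply ContinuousOn.rpow_const (by fun_prop)
    intro t ht
    left
    have := hspec t ht
    positivity
  have hx_sa : IsSelfAdjoint x := cfc_predicate f b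
  have hxbx : x * b * x = cfc (fun t : ℝ => f t * t * f t) b := by
    conv_lhs => rw [show b = cfc (fun t : ℝ => t) b from (cfc_id' ℝ b).symm]
    rw [← cfc_mul f _ b hcont (by fun_prop), ← cfc_mul _ f b (by fun_prop) hcont]
  have hxbx_le : x * b * x ≤ 1 := by
    rw [hxbx]
    apply cfc_le_one
    intro t ht
    have ht' := hspec t ht
    have h1t : (0 : ℝ) < 1 + t := by linarith
    have hrp : f t * f t = (1 + t)⁻¹ := by
      rw [hf_def]
      simp only
      rw [← Real.rpow_add h1t, show -(1/2:ℝ) + -(1/2) = (-1 : ℝ) by norm_num,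
        Real.rpow_neg_one]
    have hfe : f t * t * f t = t * (f t * f t) := by ring
    rw [hfe, hrp]
    rw [← div_eq_mul_inv, div_le_one h1t]
    linarith
  have h1 : x * a * x ≤ x * b * x := by
    simpa [hx_sa.star_eq] using star_left_conjugate_le_conjugate hab x
  have h2 : -(x * b * x) ≤ x * a * x := by
    have := star_left_conjugate_le_conjugate hba x
    simpa [hx_sa.star_eq, mul_neg, neg_mul] using this
  have hub : x * a * x ≤ 1 := h1.trans hxbx_le
  have hlb : -1 ≤ x * a * x := le_trans (neg_le_neg hxbx_le) h2
  have hsa : IsSelfAdjoint (x * a * x) := by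
    rw [IsSelfAdjoint]
    simp [star_mul, hx_sa.star_eq, ha.star_eq, mul_assoc]
  exact ⟨hlb, hub, aux_norm_le_one_of_neg_one_le_le_one hsa hlb hub⟩
end

section
/- Let H be a complex Hilbert space and (P_n)_{n ∈ ℕ} a sequence of pairwise orthogonal orthogonal projections on H, i.e., each P_n : H →L H satisfies P_n ∘ P_n = P_n and ⟪P_n x, y⟫ = ⟪x, P_n y⟫ for all x, y ∈ H, and P_n ∘ P_m = 0 whenever n ≠ m. Then for every ε > 0 and every finite set s of vectors of H, there exist infinitely many n ∈ ℕ (i.e., frequently along atTop) such that √n · ‖P_n ξ‖ < ε for all ξ ∈ s. -/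
open Filter
open scoped InnerProductSpace

private lemma bessel_aux
    {H : Type*} [NormedAddCommGroup H] [InnerProductSpace ℂ H]
    (P : ℕ → H →L[ℂ] H)
    (hidem : ∀ n, (P n).comp (P n) = P n)
    (hsa : ∀ n (x y : H), ⟪P n x, y⟫_ℂ = ⟪x, P n y⟫_ℂ)
    (horth : ∀ n m, n ≠ m → (P n).comp (P m) = 0)
    (ξ : H) (F : Finset ℕ) : ∑ n ∈ F, ‖P n ξ‖ ^ 2 ≤ ‖ξ‖ ^ 2 := by
  set y := ∑ n ∈ F, P n ξ with hy
  have hdiag : ∀ n, ⟪ξ, P n ξ⟫_ℂ = (‖P n ξ‖ ^ 2 : ℝ) := by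
    intro n
    have h1 : P n (P n ξ) = P n ξ := by
      conv_rhs => rw [← hidem n]
      rfl
    calc ⟪ξ, P n ξ⟫_ℂ = ⟪ξ, P n (P n ξ)⟫_ℂ := by rw [h1]
      _ = ⟪P n ξ, P n ξ⟫_ℂ := by rw [hsa]
      _ = (‖P n ξ‖ ^ 2 : ℝ) := by
          rw [inner_self_eq_norm_sq_to_K]; norm_num
  have hcross : ∀ n m, n ≠ m → ⟪P n ξ, P m ξ⟫_ℂ = 0 := by
    intro n m hnm
    have : P n (P m ξ) = 0 := by
      have := horth n m hnm
      calc P n (P m ξ) = ((P n).comp (P m)) ξ := rfl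
        _ = 0 := by rw [this]; rfl
    rw [hsa, this, inner_zero_right]
  have hyinner : ⟪ξ, y⟫_ℂ = ((∑ n ∈ F, ‖P n ξ‖ ^ 2 : ℝ) : ℂ) := by
    rw [hy, inner_sum]
    rw [Complex.ofReal_sum]
    exact Finset.sum_congr rfl fun n _ => hdiag n
  have hynorm : ‖y‖ ^ 2 = ∑ n ∈ F, ‖P n ξ‖ ^ 2 := by
    have : ⟪y, y⟫_ℂ = ((∑ n ∈ F, ‖P n ξ‖ ^ 2 : ℝ) : ℂ) := by
      rw [hy, sum_inner]
      push_cast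
      refine Finset.sum_congr rfl fun n hn => ?_
      rw [inner_sum]
      rw [Finset.sum_eq_single n]
      · rw [inner_self_eq_norm_sq_to_K]; norm_num
      · intro m hm hmn; exact hcross n m (Ne.symm hmn)
      · intro h; exact absurd hn h
    rw [@norm_sq_eq_re_inner ℂ, this]; exact RCLike.ofReal_re _
  set S := ∑ n ∈ F, ‖P n ξ‖ ^ 2 with hS
  have hS0 : 0 ≤ S := Finset.sum_nonneg fun n _ => sq_nonneg _
  have hcs : ‖⟪ξ, y⟫_ℂ‖ ≤ ‖ξ‖ * ‖y‖ := norm_inner_le_norm _ _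
  rw [hyinner] at hcs
  have habs : ‖((S : ℝ) : ℂ)‖ = S := by
    rw [Complex.norm_real, Real.norm_eq_abs, abs_of_nonneg hS0]
  rw [habs] at hcs
  have hy0 : 0 ≤ ‖y‖ := norm_nonneg _
  nlinarith [sq_nonneg (‖ξ‖ - ‖y‖), sq_nonneg (‖ξ‖ + ‖y‖)]

/-- If `(P n)` is a sequence of pairwise orthogonal orthogonal projections on a complex
Hilbert space, then for every `ε > 0` and every finite set `s` of vectors, there are
infinitely many `n` with `√n · ‖P n ξ‖ < ε` for all `ξ ∈ s` (key claim in Theorem 4.4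
of the paper). -/
theorem frequently_sqrt_mul_norm_proj_lt
    {H : Type*} [NormedAddCommGroup H] [InnerProductSpace ℂ H] [CompleteSpace H]
    (P : ℕ → H →L[ℂ] H)
    (hidem : ∀ n, (P n).comp (P n) = P n)
    (hsa : ∀ n (x y : H), ⟪P n x, y⟫_ℂ = ⟪x, P n y⟫_ℂ)
    (horth : ∀ n m, n ≠ m → (P n).comp (P m) = 0) :
    ∀ ε > (0 : ℝ), ∀ s : Finset H,
      ∃ᶠ n : ℕ in atTop, ∀ ξ ∈ s, Real.sqrt n * ‖P n ξ‖ < ε := by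
  intro ε hε s
  by_contra hcon
  rw [Filter.not_frequently] at hcon
  obtain ⟨N, hN⟩ := eventually_atTop.mp hcon
  set C := ∑ ξ ∈ s, ‖ξ‖ ^ 2 with hC
  have hsum : ∀ F : Finset ℕ, ∑ n ∈ F, ∑ ξ ∈ s, ‖P n ξ‖ ^ 2 ≤ C := by
    intro F
    rw [Finset.sum_comm]
    exact Finset.sum_le_sum fun ξ _ => bessel_aux P hidem hsa horth ξ F
  have key : ∀ n, N ≤ n → ε ^ 2 / (n + 1) ≤ ∑ ξ ∈ s, ‖P n ξ‖ ^ 2 := by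
    intro n hn
    have := hN n hn
    push_neg at this
    obtain ⟨ξ, hξs, hξ⟩ := this
    have h1 : ε ^ 2 ≤ (Real.sqrt n * ‖P n ξ‖) ^ 2 :=
      pow_le_pow_left₀ hε.le hξ 2
    have h2 : (Real.sqrt n * ‖P n ξ‖) ^ 2 = n * ‖P n ξ‖ ^ 2 := by
      rw [mul_pow, Real.sq_sqrt (Nat.cast_nonneg n)]
    have h3 : ε ^ 2 ≤ ((n : ℝ) + 1) * ‖P n ξ‖ ^ 2 := by
      nlinarith [sq_nonneg ‖P n ξ‖]
    have hn1 : (0 : ℝ) < (n : ℝ) + 1 := by positivity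
    rw [div_le_iff₀ hn1]
    calc ε ^ 2 ≤ ((n : ℝ) + 1) * ‖P n ξ‖ ^ 2 := h3
      _ ≤ ((n : ℝ) + 1) * ∑ ξ ∈ s, ‖P n ξ‖ ^ 2 := by
          apply mul_le_mul_of_nonneg_left _ hn1.le
          exact Finset.single_le_sum (fun ξ _ => sq_nonneg ‖P n ξ‖) hξs
      _ = (∑ ξ ∈ s, ‖P n ξ‖ ^ 2) * ((n : ℝ) + 1) := mul_comm _ _
  -- divergence of harmonic series
  have hdiv := Real.tendsto_sum_range_one_div_nat_succ_atTop
  set B := (∑ i ∈ Finset.range N, 1 / ((i : ℝ) + 1)) + C / ε ^ 2 with hB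
  have hMN : ∀ M', N ≤ M' → ∑ i ∈ Finset.range M', 1 / ((i : ℝ) + 1) ≤ B := by
    intro M' hM'
    have hsplit : ∑ i ∈ Finset.range M', 1 / ((i : ℝ) + 1)
        = ∑ i ∈ Finset.range N, 1 / ((i : ℝ) + 1)
          + ∑ i ∈ Finset.Ico N M', 1 / ((i : ℝ) + 1) := by
      rw [← Finset.sum_range_add_sum_Ico _ hM']
    rw [hsplit, hB]
    have htail : ∑ i ∈ Finset.Ico N M', 1 / ((i : ℝ) + 1) ≤ C / ε ^ 2 := by
      have h1 : ∀ i ∈ Finset.Ico N M', 1 / ((i : ℝ) + 1)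
          ≤ (∑ ξ ∈ s, ‖P i ξ‖ ^ 2) / ε ^ 2 := by
        intro i hi
        have hik := key i (Finset.mem_Ico.mp hi).1
        rw [div_le_iff₀ (by positivity), div_mul_eq_mul_div, le_div_iff₀ (by positivity)] at *
        linarith
      calc ∑ i ∈ Finset.Ico N M', 1 / ((i : ℝ) + 1)
          ≤ ∑ i ∈ Finset.Ico N M', (∑ ξ ∈ s, ‖P i ξ‖ ^ 2) / ε ^ 2 :=
            Finset.sum_le_sum h1
        _ = (∑ i ∈ Finset.Ico N M', ∑ ξ ∈ s, ‖P i ξ‖ ^ 2) / ε ^ 2 := by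
            rw [Finset.sum_div]
        _ ≤ C / ε ^ 2 := by
            rw [div_le_div_iff_of_pos_right (by positivity)]
            exact hsum _
    linarith
  obtain ⟨M', hM'B, hM'N⟩ :=
    ((hdiv.eventually_gt_atTop B).and (eventually_ge_atTop N)).exists
  exact absurd (hMN M' hM'N) (not_le.mpr hM'B)
end

section
/- Let H be a complex Hilbert space and (P_n)_{n ∈ ℕ} a sequence of pairwise orthogonal orthogonal projections on H (each P_n : H →L H satisfies P_n ∘ P_n = P_n and ⟪P_n x, y⟫ = ⟪x, P_n y⟫; P_n ∘ P_m = 0 for n ≠ m). Then the zero operator belongs to the closure, in the weak operator topology on H →L H, of the set {√n • P_n : n ∈ ℕ, n ≥ 1}. -/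
open scoped InnerProductSpace

section aux
variable {H : Type*} [NormedAddCommGroup H] [InnerProductSpace ℂ H] [CompleteSpace H]

lemma bessel_sum_le (P : ℕ → H →L[ℂ] H)
    (hidem : ∀ n, (P n).comp (P n) = P n)
    (hsa : ∀ n (x y : H), ⟪P n x, y⟫_ℂ = ⟪x, P n y⟫_ℂ)
    (horth : ∀ n m, n ≠ m → (P n).comp (P m) = 0)
    (x : H) (s : Finset ℕ) : ∑ n ∈ s, ‖P n x‖^2 ≤ ‖x‖^2 := by
  set v := ∑ n ∈ s, P n x with hv
  have happ : ∀ n y, P n (P n y) = P n y := fun n y => by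
    conv_rhs => rw [← hidem n]
    rfl
  have hcross : ∀ n m, n ≠ m → ⟪P n x, P m x⟫_ℂ = 0 := by
    intro n m hnm
    have h0 : P n (P m x) = 0 := by
      have h := horth n m hnm
      calc P n (P m x) = ((P n).comp (P m)) x := rfl
        _ = 0 := by rw [h]; rfl
    rw [hsa n x (P m x), h0, inner_zero_right]
  have hdiag : ∀ n, ⟪P n x, x⟫_ℂ = ((‖P n x‖ : ℂ))^2 := by
    intro n
    conv_lhs => rw [← happ n x]
    rw [hsa n (P n x) x, inner_self_eq_norm_sq_to_K (𝕜 := ℂ)]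
    norm_cast
  have hvx : ⟪v, x⟫_ℂ = ((∑ n ∈ s, ‖P n x‖^2 : ℝ) : ℂ) := by
    rw [hv, sum_inner]
    push_cast
    exact Finset.sum_congr rfl fun n _ => hdiag n
  have hvv : ⟪v, v⟫_ℂ = ((∑ n ∈ s, ‖P n x‖^2 : ℝ) : ℂ) := by
    rw [hv, sum_inner]
    push_cast
    refine Finset.sum_congr rfl fun n hn => ?_
    rw [inner_sum, Finset.sum_eq_single_of_mem n hn
      (fun m _ hmn => hcross n m (Ne.symm hmn))]
    rw [inner_self_eq_norm_sq_to_K (𝕜 := ℂ)]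
    norm_cast
  set S := ∑ n ∈ s, ‖P n x‖^2 with hS
  have hSnn : 0 ≤ S := Finset.sum_nonneg fun n _ => sq_nonneg _
  have hnv : ‖v‖^2 = S := by
    have h := inner_self_eq_norm_sq_to_K (𝕜 := ℂ) (x := v)
    rw [hvv] at h
    simpa [← Complex.ofReal_pow] using (congrArg Complex.re h).symm
  have hle : S ≤ ‖v‖ * ‖x‖ := by
    have h1 : S = (⟪v, x⟫_ℂ).re := by rw [hvx]; simp
    have h2 : (⟪v, x⟫_ℂ).re ≤ ‖⟪v, x⟫_ℂ‖ := Complex.re_le_norm _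
    have h3 : ‖⟪v, x⟫_ℂ‖ ≤ ‖v‖ * ‖x‖ := norm_inner_le_norm v x
    linarith
  nlinarith [norm_nonneg v, norm_nonneg x, sq_nonneg (‖v‖ - ‖x‖)]

lemma summable_finset_sum' {ι : Type*} (f : ι → ℕ → ℝ) (s : Finset ι)
    (h : ∀ i ∈ s, Summable (f i)) : Summable (fun n => ∑ i ∈ s, f i n) := by
  classical
  induction s using Finset.induction_on with
  | empty => simpa using summable_zero
  | insert a t hni ih =>
    simp only [Finset.sum_insert hni]
    exact (h a (Finset.mem_insert_self a t)).add
      (ih fun i hi => h i (Finset.mem_insert_of_mem hi))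

end aux

/-- If `(P n)` is a sequence of pairwise orthogonal orthogonal projections on a complex
Hilbert space, then the zero operator belongs to the closure, in the weak operator
topology, of the set `{√n • P n : n ≥ 1}` (established in the proof of Theorem 4.4 of
the paper). -/
theorem zero_mem_wotClosure_sqrt_smul_proj
    {H : Type*} [NormedAddCommGroup H] [InnerProductSpace ℂ H] [CompleteSpace H]
    (P : ℕ → H →L[ℂ] H)
    (hidem : ∀ n, (P n).comp (P n) = P n)
    (hsa : ∀ n (x y : H), ⟪P n x, y⟫_ℂ = ⟪x, P n y⟫_ℂ)
    (horth : ∀ n m, n ≠ m → (P n).comp (P m) = 0) :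
    (0 : H →WOT[ℂ] H) ∈ closure
      {T : H →WOT[ℂ] H | ∃ n : ℕ, 1 ≤ n ∧
        T = ContinuousLinearMapWOT.ofCLM ((Real.sqrt n : ℂ) • P n)} := by
  classical
  have happ : ∀ n (y : H), P n (P n y) = P n y := fun n y => by
    conv_rhs => rw [← hidem n]
    rfl
  have hsq : ∀ x : H, Summable (fun n => ‖P n x‖^2) := fun x =>
    summable_of_sum_range_le (fun n => sq_nonneg _)
      (fun n => bessel_sum_le P hidem hsa horth x (Finset.range n))
  rw [mem_closure_iff_nhds_basis ContinuousLinearMapWOT.hasBasis_seminorms]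
  intro U hU
  obtain ⟨fs, r, hr, rfl⟩ := (SeminormFamily.basisSets_iff _).mp hU
  set z : (H →L[ℂ] ℂ) → H := fun y => (InnerProductSpace.toDual ℂ H).symm y with hz
  set g : ℕ → ℝ := fun n => ∑ i ∈ fs, ‖P n (z i.2)‖ * ‖P n i.1‖ with hgdef
  have hgnn : ∀ n, 0 ≤ g n := fun n =>
    Finset.sum_nonneg fun i _ => mul_nonneg (norm_nonneg _) (norm_nonneg _)
  have hg : Summable g := by
    apply summable_finset_sum'
    intro i _
    refine Summable.of_nonneg_of_le (fun n => mul_nonneg (norm_nonneg _) (norm_nonneg _))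
      (fun n => ?_) (((hsq (z i.2)).add (hsq i.1)).div_const 2)
    nlinarith [sq_nonneg (‖P n (z i.2)‖ - ‖P n i.1‖)]
  have hex : ∃ n : ℕ, 1 ≤ n ∧ Real.sqrt (n : ℝ) * g n < r := by
    by_contra hcon
    push_neg at hcon
    have hle : ∀ n : ℕ, r * (1 / (n : ℝ) ^ (1/2 : ℝ)) ≤ g n := by
      intro n
      rcases Nat.eq_zero_or_pos n with h0 | h1
      · subst h0
        simp only [Nat.cast_zero]
        rw [Real.zero_rpow (by norm_num)]
        simpa using hgnn 0
      · have hsp : (0:ℝ) < Real.sqrt n := Real.sqrt_pos.mpr (by exact_mod_cast h1)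
        have hcn := hcon n h1
        have h2 : ((n:ℝ)) ^ (1/2 : ℝ) = Real.sqrt (n : ℝ) :=
          (Real.sqrt_eq_rpow (n:ℝ)).symm
        rw [h2]
        rw [mul_one_div, div_le_iff₀ hsp, mul_comm (g n) (Real.sqrt n)]
        linarith [hcn]
    have hs1 : Summable (fun n : ℕ => r * (1 / (n : ℝ) ^ (1/2 : ℝ))) :=
      Summable.of_nonneg_of_le (fun n => by positivity) hle hg
    have hs2 : Summable (fun n : ℕ => 1 / (n : ℝ) ^ (1/2 : ℝ)) :=
      (summable_mul_left_iff (ne_of_gt hr)).mp hs1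
    have := Real.summable_one_div_nat_rpow.mp hs2
    norm_num at this
  obtain ⟨n, hn1, hn⟩ := hex
  refine ⟨_, ⟨n, hn1, rfl⟩, ?_⟩
  simp only [id_eq]
  rw [Seminorm.mem_ball_zero]
  refine Seminorm.finset_sup_apply_lt hr (fun i hi => ?_)
  have hsem : (ContinuousLinearMapWOT.seminormFamily (RingHom.id ℂ) H H i)
      (ContinuousLinearMapWOT.ofCLM ((Real.sqrt n : ℂ) • P n))
      = ‖i.2 (((Real.sqrt n : ℂ) • P n) i.1)‖ := rfl
  rw [hsem]
  have h1 : i.2 (((Real.sqrt n : ℂ) • P n) i.1)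
      = (Real.sqrt n : ℂ) * i.2 (P n i.1) := by
    simp [ContinuousLinearMap.smul_apply]
  rw [h1, norm_mul]
  have h2 : ‖((Real.sqrt n : ℝ) : ℂ)‖ = Real.sqrt n := by
    rw [Complex.norm_real, Real.norm_eq_abs, abs_of_nonneg (Real.sqrt_nonneg _)]
  rw [h2]
  have h3 : i.2 (P n i.1) = ⟪P n (z i.2), P n i.1⟫_ℂ := by
    rw [← InnerProductSpace.toDual_symm_apply (y := i.2) (x := P n i.1)]
    show ⟪z i.2, P n i.1⟫_ℂ = _
    conv_lhs => rw [← happ n i.1]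
    rw [← hsa n (z i.2) (P n i.1)]
  have h4 : ‖i.2 (P n i.1)‖ ≤ ‖P n (z i.2)‖ * ‖P n i.1‖ := by
    rw [h3]; exact norm_inner_le_norm _ _
  have h5 : ‖P n (z i.2)‖ * ‖P n i.1‖ ≤ g n :=
    Finset.single_le_sum (f := fun j => ‖P n (z j.2)‖ * ‖P n j.1‖)
      (fun j _ => mul_nonneg (norm_nonneg _) (norm_nonneg _)) hi
  calc Real.sqrt n * ‖i.2 (P n i.1)‖ ≤ Real.sqrt n * g n := by
        apply mul_le_mul_of_nonneg_left (le_trans h4 h5) (Real.sqrt_nonneg _)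
    _ < r := hn
end

section
/- Let (Ω, μ) be a finite measure space with no atoms (μ is nonatomic) and μ(Ω) > 0. Then there exists a sequence (f_n) of nonnegative real-valued measurable functions on Ω such that f_n → 0 in measure μ, but (f_n) does not (o)-converge to 0: there is no sequence (S_n) of measurable functions with S_{n+1} ≤ S_n a.e. for all n, S_n → 0 a.e., and f_n ≤ S_n a.e. for all n. -/
open MeasureTheory Filter Topology
open scoped ENNReal

namespace ExistsTIMAux

variable {Ω : Type*} [MeasurableSpace Ω] {μ : Measure Ω} [IsFiniteMeasure μ]

/-- Halving: a positive-measure set contains a positive-measure subset of at most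
half its measure. -/
lemma halve (hna : ∀ s : Set Ω, MeasurableSet s → 0 < μ s →
      ∃ t ⊆ s, MeasurableSet t ∧ 0 < μ t ∧ μ t < μ s)
    {s : Set Ω} (hs : MeasurableSet s) (h : 0 < μ s) :
    ∃ t ⊆ s, MeasurableSet t ∧ 0 < μ t ∧ 2 * μ t ≤ μ s := by
  obtain ⟨t, hts, htm, htp, htlt⟩ := hna s hs h
  have hadd : μ (s ∩ t) + μ (s \ t) = μ s := measure_inter_add_diff s htm
  rw [Set.inter_eq_self_of_subset_right hts] at hadd
  rcases le_total (μ t) (μ (s \ t)) with hle | hle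
  · refine ⟨t, hts, htm, htp, ?_⟩
    calc 2 * μ t = μ t + μ t := two_mul _
      _ ≤ μ t + μ (s \ t) := by gcongr
      _ = μ s := hadd
  · refine ⟨s \ t, Set.diff_subset, hs.diff htm, ?_, ?_⟩
    · rcases eq_or_lt_of_le (zero_le : (0:ℝ≥0∞) ≤ μ (s \ t)) with h0 | h0
      · exfalso
        rw [← h0, add_zero] at hadd
        exact absurd hadd (ne_of_lt htlt)
      · exact h0
    · calc 2 * μ (s \ t) = μ (s \ t) + μ (s \ t) := two_mul _
        _ ≤ μ t + μ (s \ t) := by gcongr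
        _ = μ s := hadd

/-- A positive-measure set contains positive-measure subsets of arbitrarily small
measure. -/
lemma small (hna : ∀ s : Set Ω, MeasurableSet s → 0 < μ s →
      ∃ t ⊆ s, MeasurableSet t ∧ 0 < μ t ∧ μ t < μ s)
    {s : Set Ω} (hs : MeasurableSet s) (h : 0 < μ s) {ε : ℝ≥0∞} (hε : 0 < ε) :
    ∃ t ⊆ s, MeasurableSet t ∧ 0 < μ t ∧ μ t ≤ ε := by
  have key : ∀ k : ℕ, ∃ t ⊆ s, MeasurableSet t ∧ 0 < μ t ∧ 2 ^ k * μ t ≤ μ s := by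
    intro k
    induction k with
    | zero => exact ⟨s, subset_rfl, hs, h, by simpa using le_rfl⟩
    | succ k ih =>
      obtain ⟨t, hts, htm, htp, hle⟩ := ih
      obtain ⟨u, hut, hum, hup, hle2⟩ := halve hna htm htp
      refine ⟨u, hut.trans hts, hum, hup, ?_⟩
      calc (2:ℝ≥0∞) ^ (k+1) * μ u = 2 ^ k * (2 * μ u) := by ring
        _ ≤ 2 ^ k * μ t := by gcongr
        _ ≤ μ s := hle
  rcases le_or_gt (μ s) ε with hse | hse
  · exact ⟨s, subset_rfl, hs, h, hse⟩
  -- choose k with μ s ≤ 2 ^ k * ε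
  have hdiv : μ s / ε ≠ ∞ := (ENNReal.div_lt_top (measure_ne_top μ s) hε.ne').ne
  obtain ⟨n, hn⟩ := ENNReal.exists_nat_gt hdiv
  have hsn : μ s ≤ 2 ^ n * ε := by
    have h1 : μ s < (n : ℝ≥0∞) * ε := by
      rwa [ENNReal.div_lt_iff (Or.inl hε.ne') (Or.inl (hse.trans_le le_top).ne)] at hn
    refine h1.le.trans ?_
    gcongr
    calc (n : ℝ≥0∞) ≤ ((2 ^ n : ℕ) : ℝ≥0∞) := by
          exact_mod_cast (Nat.lt_two_pow_self (n := n)).le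
      _ = 2 ^ n := by push_cast; ring
  obtain ⟨t, hts, htm, htp, hle⟩ := key n
  refine ⟨t, hts, htm, htp, ?_⟩
  have h2 : (2:ℝ≥0∞) ^ n * μ t ≤ 2 ^ n * ε := hle.trans hsn
  rwa [ENNReal.mul_le_mul_iff_right (by positivity) (ENNReal.pow_ne_top ENNReal.ofNat_ne_top)] at h2

/-- Existence of a near-maximal small subset. -/
lemma pick_exists {ε : ℝ≥0∞} (hε : ε ≠ ∞) {R : Set Ω} (hR : MeasurableSet R) :
    ∃ t, t ⊆ R ∧ MeasurableSet t ∧ μ t ≤ ε ∧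
      ∀ u, u ⊆ R → MeasurableSet u → μ u ≤ ε → μ u ≤ 2 * μ t := by
  classical
  set M : ℝ≥0∞ := ⨆ (u : Set Ω) (_ : u ⊆ R ∧ MeasurableSet u ∧ μ u ≤ ε), μ u with hM
  have hle : ∀ u, u ⊆ R → MeasurableSet u → μ u ≤ ε → μ u ≤ M := by
    intro u h1 h2 h3
    exact le_iSup₂ (f := fun (u : Set Ω) (_ : u ⊆ R ∧ MeasurableSet u ∧ μ u ≤ ε) => μ u)
      u ⟨h1, h2, h3⟩
  have hMε : M ≤ ε := by
    refine iSup₂_le fun u hu => hu.2.2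
  rcases eq_or_lt_of_le (zero_le : (0:ℝ≥0∞) ≤ M) with h0 | h0
  · refine ⟨∅, Set.empty_subset _, MeasurableSet.empty, by simp, ?_⟩
    intro u h1 h2 h3
    have := hle u h1 h2 h3
    simp only [measure_empty, mul_zero]
    exact this.trans_eq h0.symm
  · have hMt : M ≠ ∞ := (hMε.trans_lt (lt_top_iff_ne_top.mpr hε)).ne
    have hhalf : M / 2 < M := ENNReal.half_lt_self h0.ne' hMt
    rw [hM] at hhalf
    simp only [lt_iSup_iff] at hhalf
    obtain ⟨u, ⟨h1, h2, h3⟩, hu⟩ := hhalf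
    refine ⟨u, h1, h2, h3, ?_⟩
    intro v hv1 hv2 hv3
    calc μ v ≤ M := hle v hv1 hv2 hv3
      _ = 2 * (M / 2) := (ENNReal.mul_div_cancel two_ne_zero (by finiteness)).symm
      _ ≤ 2 * μ u := mul_le_mul_right hu.le 2

/-- A countable a.e.-partition of the space into measurable pieces of measure ≤ ε. -/
lemma partition (hna : ∀ s : Set Ω, MeasurableSet s → 0 < μ s →
      ∃ t ⊆ s, MeasurableSet t ∧ 0 < μ t ∧ μ t < μ s)
    {ε : ℝ≥0∞} (hε0 : 0 < ε) (hεt : ε ≠ ∞) :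
    ∃ A : ℕ → Set Ω, (∀ k, MeasurableSet (A k)) ∧ Pairwise (Function.onFun Disjoint A) ∧
      (∀ k, μ (A k) ≤ ε) ∧ μ (Set.univ \ ⋃ k, A k) = 0 := by
  classical
  set P : Set Ω → Set Ω := fun R =>
    if h : MeasurableSet R then (pick_exists (μ := μ) hεt h).choose else ∅ with hPdef
  have hP : ∀ R, MeasurableSet R → P R ⊆ R ∧ MeasurableSet (P R) ∧ μ (P R) ≤ ε ∧
      ∀ u, u ⊆ R → MeasurableSet u → μ u ≤ ε → μ u ≤ 2 * μ (P R) := by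
    intro R h
    simp only [hPdef, dif_pos h]
    exact (pick_exists (μ := μ) hεt h).choose_spec
  set R : ℕ → Set Ω := fun n => Nat.rec Set.univ (fun _ r => r \ P r) n with hRdef
  have hR0 : R 0 = Set.univ := rfl
  have hRsucc : ∀ n, R (n + 1) = R n \ P (R n) := fun n => rfl
  have hRm : ∀ n, MeasurableSet (R n) := by
    intro n
    induction n with
    | zero => exact MeasurableSet.univ
    | succ n ih => rw [hRsucc]; exact ih.diff (hP _ ih).2.1
  set A : ℕ → Set Ω := fun n => P (R n) with hAdef
  have hAm : ∀ n, MeasurableSet (A n) := fun n => (hP _ (hRm n)).2.1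
  have hAsub : ∀ n, A n ⊆ R n := fun n => (hP _ (hRm n)).1
  have hAsmall : ∀ n, μ (A n) ≤ ε := fun n => (hP _ (hRm n)).2.2.1
  have hRanti : Antitone R := by
    refine antitone_nat_of_succ_le fun n => ?_
    rw [hRsucc]; exact Set.diff_subset
  have hdisj : Pairwise (Function.onFun Disjoint A) := by
    have key : ∀ i j, i < j → Disjoint (A i) (A j) := by
      intro i j hij
      have h1 : A j ⊆ R (i + 1) := (hAsub j).trans (hRanti hij)
      rw [hRsucc] at h1
      exact Set.disjoint_left.mpr fun x hxi hxj => (h1 hxj).2 hxi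
    intro i j hij
    rcases hij.lt_or_gt with h | h
    · exact key i j h
    · exact (key j i h).symm
  have hrem : Set.univ \ ⋃ k, A k ⊆ ⋂ n, R n := by
    intro x hx
    simp only [Set.mem_diff, Set.mem_iUnion, not_exists] at hx
    simp only [Set.mem_iInter]
    intro n
    induction n with
    | zero => exact Set.mem_univ x
    | succ n ih => rw [hRsucc]; exact ⟨ih, hx.2 n⟩
  have hinter : μ (⋂ n, R n) = 0 := by
    by_contra h0
    have hpos : 0 < μ (⋂ n, R n) := pos_iff_ne_zero.mpr h0
    obtain ⟨t, hts, htm, htp, htε⟩ :=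
      small hna (MeasurableSet.iInter hRm) hpos hε0
    have hdom : ∀ n, μ t ≤ 2 * μ (A n) := by
      intro n
      exact (hP _ (hRm n)).2.2.2 t (hts.trans (Set.iInter_subset _ n)) htm htε
    have htsum : ∑' n, μ (A n) ≠ ∞ := by
      rw [← measure_iUnion hdisj hAm]
      exact measure_ne_top μ _
    have htend : Tendsto (fun n => μ (A n)) atTop (𝓝 0) :=
      ENNReal.tendsto_atTop_zero_of_tsum_ne_top htsum
    have hhalfpos : (0:ℝ≥0∞) < μ t / 2 := ENNReal.half_pos htp.ne'
    obtain ⟨n, hn⟩ := (htend.eventually_lt_const hhalfpos).exists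
    have : μ t < μ t := by
      calc μ t ≤ 2 * μ (A n) := hdom n
        _ < 2 * (μ t / 2) := by
            exact ENNReal.mul_lt_mul_iff_right two_ne_zero (by finiteness) |>.mpr hn
        _ = μ t := ENNReal.mul_div_cancel two_ne_zero (by finiteness)
    exact lt_irrefl _ this
  exact ⟨A, hAm, hdisj, hAsmall, measure_mono_null hrem hinter⟩

end ExistsTIMAux

/-- On a nonatomic finite measure space of positive measure there is a sequence of
nonnegative measurable functions converging to `0` in measure which does not
`(o)`-converge to `0` (commutative core of Proposition 5.3 of the paper). -/
theorem exists_tendstoInMeasure_not_order_convergent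
    {Ω : Type*} [MeasurableSpace Ω] {μ : Measure Ω} [IsFiniteMeasure μ]
    (hnonatomic : ∀ s : Set Ω, MeasurableSet s → 0 < μ s →
      ∃ t ⊆ s, MeasurableSet t ∧ 0 < μ t ∧ μ t < μ s)
    (hpos : 0 < μ Set.univ) :
    ∃ f : ℕ → Ω → ℝ, (∀ n, Measurable (f n)) ∧ (∀ n ω, 0 ≤ f n ω) ∧
      TendstoInMeasure μ f atTop 0 ∧
      ¬ ∃ S : ℕ → Ω → ℝ, (∀ n, Measurable (S n)) ∧
          (∀ n, ∀ᵐ ω ∂μ, S (n + 1) ω ≤ S n ω) ∧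
          (∀ᵐ ω ∂μ, Tendsto (fun n => S n ω) atTop (𝓝 0)) ∧
          (∀ n, ∀ᵐ ω ∂μ, f n ω ≤ S n ω) := by
  classical
  -- for each n, a countable a.e.-partition into pieces of measure ≤ (n+1)⁻¹
  have hpart : ∀ n : ℕ, ∃ A : ℕ → Set Ω, (∀ k, MeasurableSet (A k)) ∧
      Pairwise (Function.onFun Disjoint A) ∧ (∀ k, μ (A k) ≤ ((n : ℝ≥0∞) + 1)⁻¹) ∧
      μ (Set.univ \ ⋃ k, A k) = 0 := by
    intro n
    refine ExistsTIMAux.partition hnonatomic ?_ ?_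
    · exact ENNReal.inv_pos.mpr (by finiteness)
    · exact ENNReal.inv_ne_top.mpr (by simp)
  choose A hAm hAd hAs hAn using hpart
  set e : ℕ ≃ ℕ × ℕ := (Denumerable.eqv (ℕ × ℕ)).symm with he_def
  set f : ℕ → Ω → ℝ := fun m => (A (e m).1 (e m).2).indicator (fun _ => (1:ℝ)) with hf_def
  have hfm : ∀ m, Measurable (f m) := fun m =>
    measurable_const.indicator (hAm _ _)
  have hfnn : ∀ m ω, 0 ≤ f m ω := fun m ω =>
    Set.indicator_nonneg (fun _ _ => zero_le_one) ω
  -- convergence in measure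
  have hg : Tendsto (fun p : ℕ × ℕ => μ (A p.1 p.2)) cofinite (𝓝 0) := by
    rw [ENNReal.tendsto_nhds_zero]
    intro δ hδ
    rw [eventually_cofinite]
    obtain ⟨N, hN⟩ := ENNReal.exists_inv_nat_lt hδ.ne'
    have hfin : ∀ n, {k | δ ≤ μ (A n k)}.Finite := by
      intro n
      refine ENNReal.finite_const_le_of_tsum_ne_top ?_ hδ.ne'
      rw [← measure_iUnion (hAd n) (hAm n)]
      exact measure_ne_top μ _
    refine Set.Finite.subset (Set.Finite.biUnion (Set.finite_Iio N)
      (fun n _ => (hfin n).image (Prod.mk n))) ?_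
    intro p hp
    simp only [Set.mem_setOf_eq, not_le] at hp
    have hpN : p.1 < N := by
      by_contra hge
      push_neg at hge
      have h1 : μ (A p.1 p.2) ≤ ((p.1 : ℝ≥0∞) + 1)⁻¹ := hAs p.1 p.2
      have h2 : ((p.1 : ℝ≥0∞) + 1)⁻¹ ≤ ((N : ℝ≥0∞))⁻¹ := by
        refine ENNReal.inv_le_inv.mpr ?_
        calc (N : ℝ≥0∞) ≤ (p.1 : ℝ≥0∞) := by exact_mod_cast hge
          _ ≤ (p.1 : ℝ≥0∞) + 1 := le_self_add
      exact absurd ((h1.trans h2).trans_lt hN) (not_lt.mpr hp.le)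
    simp only [Set.mem_iUnion, Set.mem_image, Set.mem_setOf_eq, Set.mem_Iio]
    exact ⟨p.1, hpN, p.2, hp.le, rfl⟩
  have he : Tendsto e atTop cofinite := by
    rw [← Nat.cofinite_eq_atTop]
    exact e.injective.tendsto_cofinite
  have hTIM : TendstoInMeasure μ f atTop 0 := by
    intro δ hδ
    refine tendsto_of_tendsto_of_tendsto_of_le_of_le tendsto_const_nhds (hg.comp he)
      (fun m => zero_le) ?_
    intro m
    refine measure_mono ?_
    intro x hx
    simp only [Set.mem_setOf_eq, Pi.zero_apply, Real.dist_eq, sub_zero] at hx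
    by_contra hxA
    have : f m x = 0 := Set.indicator_of_notMem hxA _
    rw [this] at hx
    simp at hx
    exact absurd hx hδ.ne'
  refine ⟨f, hfm, hfnn, hTIM, ?_⟩
  rintro ⟨S, hSm, hSdec, hS0, hSdom⟩
  -- collect the a.e. hypotheses
  have hcov : ∀ n, ∀ᵐ ω ∂μ, ω ∈ ⋃ k, A n k := by
    intro n
    rw [ae_iff]
    refine measure_mono_null ?_ (hAn n)
    intro x hx
    exact ⟨Set.mem_univ x, hx⟩
  have hae : ∀ᵐ ω ∂μ, (∀ n, S (n + 1) ω ≤ S n ω) ∧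
      Tendsto (fun n => S n ω) atTop (𝓝 0) ∧ (∀ m, f m ω ≤ S m ω) ∧
      (∀ n, ω ∈ ⋃ k, A n k) := by
    refine ((ae_all_iff.mpr hSdec).and (hS0.and
      ((ae_all_iff.mpr hSdom).and (ae_all_iff.mpr hcov))))
  have hfalse : ∀ᵐ ω ∂μ, False := by
    filter_upwards [hae] with ω h
    obtain ⟨hdec, h0, hdom, hcover⟩ := h
    have hanti : Antitone fun n => S n ω := antitone_nat_of_succ_le hdec
    choose k hk using fun n => Set.mem_iUnion.mp (hcover n)
    have h1 : ∀ N : ℕ, (1:ℝ) ≤ S N ω := by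
      intro N
      have hinj : Function.Injective (fun n => e.symm (n, k n)) := by
        intro a b hab
        have := e.symm.injective hab
        exact (Prod.mk.injEq _ _ _ _).mp this |>.1
      have hinf : {m | f m ω = 1}.Infinite := by
        refine Set.Infinite.mono ?_ (Set.infinite_range_of_injective hinj)
        rintro m ⟨n, rfl⟩
        simp only [Set.mem_setOf_eq, hf_def]
        have hm : e (e.symm (n, k n)) = (n, k n) := e.apply_symm_apply _
        rw [hm]
        exact Set.indicator_of_mem (hk n) _
      obtain ⟨m, hm1, hmN⟩ := hinf.exists_gt N
      calc (1:ℝ) = f m ω := hm1.symm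
        _ ≤ S m ω := hdom m
        _ ≤ S N ω := hanti hmN.le
    obtain ⟨n, hn⟩ := (h0.eventually_lt_const zero_lt_one).exists
    exact absurd (h1 n) (not_le.mpr hn)
  rw [ae_iff] at hfalse
  simp only [not_false_eq_true, Set.setOf_true] at hfalse
  exact absurd hfalse hpos.ne'
end

section
/- Let (Ω, μ) be a measure space which is purely atomic: there is a countable measurable partition (A_i)_{i ∈ ℕ} of Ω (up to a μ-null set) such that each A_i is either μ-null or an atom of μ (μ(A_i) > 0 and every measurable subset of A_i has measure 0 or μ(A_i)). If (f_n) is a sequence of real-valued measurable functions with f_n → 0 in measure μ, then (f_n) (o)-converges to 0: there exists a sequence (S_n) of measurable functions with S_{n+1} ≤ S_n a.e. for all n, S_n → 0 a.e., and |f_n| ≤ S_n a.e. for all n. -/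
open MeasureTheory Filter Topology
open scoped ENNReal NNReal

/-- On a purely atomic measure space (a countable measurable partition, up to a null
set, into sets that are null or atoms), every sequence of measurable functions that
converges to `0` in measure also `(o)`-converges to `0` (commutative instance of
Proposition 5.3 (i) ⇒ (ii) of the paper). -/
theorem order_convergent_of_tendstoInMeasure_of_atomic
    {Ω : Type*} [MeasurableSpace Ω] {μ : Measure Ω}
    (A : ℕ → Set Ω) (hA : ∀ i, MeasurableSet (A i))
    (hdisj : Pairwise (Function.onFun Disjoint A))
    (hcover : μ (Set.univ \ ⋃ i, A i) = 0)
    (hatom : ∀ i, μ (A i) = 0 ∨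
      (0 < μ (A i) ∧ ∀ t ⊆ A i, MeasurableSet t → μ t = 0 ∨ μ t = μ (A i)))
    (f : ℕ → Ω → ℝ) (hf : ∀ n, Measurable (f n))
    (hconv : TendstoInMeasure μ f atTop 0) :
    ∃ S : ℕ → Ω → ℝ, (∀ n, Measurable (S n)) ∧
      (∀ n, ∀ᵐ ω ∂μ, S (n + 1) ω ≤ S n ω) ∧
      (∀ᵐ ω ∂μ, Tendsto (fun n => S n ω) atTop (𝓝 0)) ∧
      (∀ n, ∀ᵐ ω ∂μ, |f n ω| ≤ S n ω) := by
  -- Step 1: on each atom, eventually the ε-bad set is null.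
  have key : ∀ i, (0 < μ (A i) ∧ ∀ t ⊆ A i, MeasurableSet t → μ t = 0 ∨ μ t = μ (A i)) →
      ∀ ε : ℝ, 0 < ε → ∀ᶠ n in atTop, μ (A i ∩ {ω | ε ≤ |f n ω|}) = 0 := by
    intro i hi ε hε
    have h := (tendstoInMeasure_iff_dist.mp hconv) ε hε
    have h2 : ∀ᶠ n in atTop, μ {ω | ε ≤ dist (f n ω) ((0 : ℕ → Ω → ℝ) n ω)} < μ (A i) :=
      h.eventually_lt_const hi.1
    filter_upwards [h2] with n hn
    have hn' : μ {ω | ε ≤ |f n ω|} < μ (A i) := by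
      simpa [dist_zero_right, Real.norm_eq_abs] using hn
    have hm : MeasurableSet (A i ∩ {ω | ε ≤ |f n ω|}) :=
      (hA i).inter (measurableSet_le measurable_const (hf n).abs)
    rcases hi.2 _ Set.inter_subset_left hm with h0 | h0
    · exact h0
    · exact absurd h0
        (ne_of_lt (lt_of_le_of_lt (measure_mono Set.inter_subset_right) hn'))
  -- Step 2: a.e. convergence to 0.
  have hAi : ∀ i, ∀ᵐ ω ∂μ, ω ∈ A i → Tendsto (fun n => f n ω) atTop (𝓝 0) := by
    intro i
    rcases hatom i with h0 | hi
    · have h1 : ∀ᵐ ω ∂μ, ω ∉ A i := measure_eq_zero_iff_ae_notMem.mp h0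
      filter_upwards [h1] with ω hω h
      exact absurd h hω
    · have hk : ∀ k : ℕ, ∃ N, ∀ n ≥ N,
          μ (A i ∩ {ω | 1 / ((k : ℝ) + 1) ≤ |f n ω|}) = 0 := fun k =>
        eventually_atTop.mp (key i hi (1 / ((k : ℝ) + 1)) (by positivity))
      choose N hN using hk
      have hnull : μ (⋃ (k : ℕ) (n : ℕ) (_ : N k ≤ n),
          A i ∩ {ω | 1 / ((k : ℝ) + 1) ≤ |f n ω|}) = 0 := by
        refine measure_iUnion_null fun k => measure_iUnion_null fun n =>
          measure_iUnion_null fun h => hN k n h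
      have hae' := measure_eq_zero_iff_ae_notMem.mp hnull
      filter_upwards [hae'] with ω hω hmem
      rw [Metric.tendsto_atTop]
      intro ε hε
      obtain ⟨k, hk⟩ := exists_nat_one_div_lt hε
      refine ⟨N k, fun n hn => ?_⟩
      have hnot : ω ∉ A i ∩ {ω | 1 / ((k : ℝ) + 1) ≤ |f n ω|} := fun hc =>
        hω (Set.mem_iUnion.mpr ⟨k, Set.mem_iUnion.mpr ⟨n, Set.mem_iUnion.mpr ⟨hn, hc⟩⟩⟩)
      have hlt : |f n ω| < 1 / ((k : ℝ) + 1) := by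
        by_contra h
        exact hnot ⟨hmem, le_of_not_gt h⟩
      calc dist (f n ω) 0 = |f n ω| := by rw [dist_zero_right, Real.norm_eq_abs]
        _ < 1 / ((k : ℝ) + 1) := hlt
        _ < ε := hk
  have hae : ∀ᵐ ω ∂μ, Tendsto (fun n => f n ω) atTop (𝓝 0) := by
    have h1 : ∀ᵐ ω ∂μ, ∀ i, ω ∈ A i → Tendsto (fun n => f n ω) atTop (𝓝 0) :=
      ae_all_iff.mpr hAi
    have h2 : ∀ᵐ ω ∂μ, ω ∈ ⋃ i, A i := by
      have := measure_eq_zero_iff_ae_notMem.mp hcover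
      filter_upwards [this] with ω hω
      by_contra h
      exact hω ⟨Set.mem_univ ω, h⟩
    filter_upwards [h1, h2] with ω hω1 hω2
    obtain ⟨i, hi⟩ := Set.mem_iUnion.mp hω2
    exact hω1 i hi
  -- Step 3: build the dominating sequence as tail suprema.
  set T : ℕ → Ω → ℝ≥0∞ := fun n ω => ⨆ m, (‖f (n + m) ω‖₊ : ℝ≥0∞) with hTdef
  have hmono : ∀ ω n, T (n + 1) ω ≤ T n ω := by
    intro ω n
    refine iSup_le fun m => ?_
    have h : n + 1 + m = n + (m + 1) := by ring
    rw [hTdef]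
    simp only [h]
    exact le_iSup (fun m => (‖f (n + m) ω‖₊ : ℝ≥0∞)) (m + 1)
  have hfin : ∀ ω, Tendsto (fun n => f n ω) atTop (𝓝 0) → ∀ n, T n ω ≠ ⊤ := by
    intro ω hω n
    obtain ⟨C, hC⟩ := (hω.norm).bddAbove_range
    have hle : T n ω ≤ ENNReal.ofReal C := by
      refine iSup_le fun m => ?_
      rw [← enorm_eq_nnnorm, ← ofReal_norm]
      exact ENNReal.ofReal_le_ofReal (hC ⟨n + m, rfl⟩)
    exact ne_top_of_le_ne_top ENNReal.ofReal_ne_top hle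
  refine ⟨fun n ω => (T n ω).toReal, ?_, ?_, ?_, ?_⟩
  · intro n
    exact (Measurable.iSup fun m => ((hf (n + m)).nnnorm).coe_nnreal_ennreal).ennreal_toReal
  · intro n
    filter_upwards [hae] with ω hω
    exact ENNReal.toReal_mono (hfin ω hω n) (hmono ω n)
  · filter_upwards [hae] with ω hω
    rw [Metric.tendsto_atTop] at hω ⊢
    intro ε hε
    obtain ⟨M, hM⟩ := hω (ε / 2) (by positivity)
    refine ⟨M, fun n hn => ?_⟩
    have hTn : T n ω ≤ ENNReal.ofReal (ε / 2) := by
      refine iSup_le fun m => ?_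
      rw [← enorm_eq_nnnorm, ← ofReal_norm]
      refine ENNReal.ofReal_le_ofReal ?_
      have h := hM (n + m) (le_trans hn (Nat.le_add_right n m))
      rw [dist_zero_right, Real.norm_eq_abs] at h
      rw [Real.norm_eq_abs]
      exact le_of_lt h
    have h1 : (T n ω).toReal ≤ ε / 2 := by
      have := ENNReal.toReal_mono ENNReal.ofReal_ne_top hTn
      rwa [ENNReal.toReal_ofReal (by positivity)] at this
    calc dist ((T n ω).toReal) 0 = |(T n ω).toReal| := by rw [dist_zero_right, Real.norm_eq_abs]
      _ = (T n ω).toReal := abs_of_nonneg ENNReal.toReal_nonneg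
      _ ≤ ε / 2 := h1
      _ < ε := by linarith
  · intro n
    filter_upwards [hae] with ω hω
    have hle : (‖f n ω‖₊ : ℝ≥0∞) ≤ T n ω := by
      have := le_iSup (fun m => (‖f (n + m) ω‖₊ : ℝ≥0∞)) 0
      simpa using this
    have h2 := ENNReal.toReal_mono (hfin ω hω n) hle
    simpa [Real.norm_eq_abs] using h2
end

section
/- Let (Ω, μ) be a σ-finite measure space with μ(Ω) = ∞. Then there exists an antitone sequence (B_n) of measurable sets with μ(B_n) = ∞ for every n such that the indicator functions χ_{B_n} converge to 0 in measure with respect to μ.restrict A for every measurable set A with μ A < ∞, but the sequence (χ_{B_n}) does not converge to 0 in measure μ (globally). -/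
open MeasureTheory Filter Topology
open scoped ENNReal

/-- On a σ-finite measure space of infinite measure there is an antitone sequence of
measurable sets of infinite measure whose indicator functions converge to `0` in
measure on every set of finite measure but not globally in measure (commutative
content of Proposition 3.2 and Corollary 4.3(i) of the paper). -/
theorem exists_antitone_sets_locally_but_not_globally_tendstoInMeasure
    {Ω : Type*} [MeasurableSpace Ω] {μ : Measure Ω} [SigmaFinite μ]
    (hμ : μ Set.univ = ∞) :
    ∃ B : ℕ → Set Ω, (∀ n, MeasurableSet (B n)) ∧ Antitone B ∧
      (∀ n, μ (B n) = ∞) ∧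
      (∀ A : Set Ω, MeasurableSet A → μ A < ∞ →
        TendstoInMeasure (μ.restrict A)
          (fun n => (B n).indicator (fun _ => (1 : ℝ))) atTop 0) ∧
      ¬ TendstoInMeasure μ (fun n => (B n).indicator (fun _ => (1 : ℝ))) atTop 0 := by
  set S : ℕ → Set Ω := spanningSets μ
  refine ⟨fun n => (S n)ᶜ, fun n => (measurableSet_spanningSets μ n).compl,
    fun m n hmn => Set.compl_subset_compl.2 (monotone_spanningSets μ hmn), ?_, ?_, ?_⟩
  · intro n
    by_contra h
    have hfin : μ (S n) < ∞ := measure_spanningSets_lt_top μ n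
    have : μ Set.univ < ∞ := by
      calc μ Set.univ ≤ μ (S n) + μ (S n)ᶜ := by
            rw [← Set.union_compl_self (S n)]; exact measure_union_le _ _
        _ < ∞ := ENNReal.add_lt_top.2 ⟨hfin, lt_top_iff_ne_top.2 h⟩
    exact absurd hμ this.ne
  · intro A hA hAfin ε hε
    have key : Tendsto (fun n => μ.restrict A (S n)ᶜ) atTop (𝓝 0) := by
      have h1 : Tendsto ((μ.restrict A) ∘ fun n => (S n)ᶜ) atTop
          (𝓝 (μ.restrict A (⋂ n, (S n)ᶜ))) := by
        refine tendsto_measure_iInter_atTop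
          (fun n => (measurableSet_spanningSets μ n).compl.nullMeasurableSet)
          (fun m n hmn => Set.compl_subset_compl.2 (monotone_spanningSets μ hmn)) ⟨0, ?_⟩
        exact ((measure_mono (Set.subset_univ _)).trans_lt
          (by rwa [Measure.restrict_apply_univ])).ne
      have h2 : (⋂ n, (S n)ᶜ) = ∅ := by
        rw [← Set.compl_iUnion, iUnion_spanningSets, Set.compl_univ]
      rw [h2, measure_empty] at h1
      exact h1
    refine tendsto_of_tendsto_of_tendsto_of_le_of_le tendsto_const_nhds key
      (fun n => zero_le) (fun n => measure_mono ?_)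
    intro x hx
    simp only [Set.mem_setOf_eq, Pi.zero_apply, dist_zero_right] at hx
    by_contra hxB
    simp only [Set.mem_compl_iff, not_not] at hxB
    rw [Set.indicator_of_notMem (by simpa using hxB)] at hx
    simp at hx
    simp [hx] at hε
  · intro h
    have h1 := h 1 one_pos
    have hsub : ∀ n, (S n)ᶜ ⊆
        {x | (1 : ℝ≥0∞) ≤ edist (((S n)ᶜ).indicator (fun _ => (1 : ℝ)) x) ((0 : Ω → ℝ) x)} := by
      intro n x hx
      simp [Set.indicator_of_mem hx]
    have hev := h1.eventually_lt_const (by norm_num : (0:ℝ≥0∞) < 1)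
    obtain ⟨n, hn⟩ := hev.exists
    have : μ (S n)ᶜ ≤ μ {x | (1 : ℝ≥0∞) ≤ edist (((S n)ᶜ).indicator (fun _ => (1 : ℝ)) x)
        ((0 : Ω → ℝ) x)} := measure_mono (hsub n)
    have hBn : μ (S n)ᶜ = ∞ := by
      by_contra hcon
      have hfin : μ (S n) < ∞ := measure_spanningSets_lt_top μ n
      have : μ Set.univ < ∞ := by
        calc μ Set.univ ≤ μ (S n) + μ (S n)ᶜ := by
              rw [← Set.union_compl_self (S n)]; exact measure_union_le _ _
          _ < ∞ := ENNReal.add_lt_top.2 ⟨hfin, lt_top_iff_ne_top.2 hcon⟩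
      exact absurd hμ this.ne
    rw [hBn] at this
    exact absurd (lt_of_le_of_lt (le_trans this (le_refl _)) hn) (by simp)
end

section
/- Let (Ω, μ) be a σ-finite measure space, ι a nonempty directed preorder, and g : ι → (Ω →ₘ[μ] ℝ) an antitone net in the a.e. order such that 0 is the greatest lower bound of the range of g (IsGLB (Set.range g) 0). Then there exists a monotone sequence u : ℕ → ι such that for μ-a.e. ω, the sequence g(u n) ω tends to 0 as n → ∞. -/
open MeasureTheory Filter Topology

/-- On a σ-finite measure space, every antitone net `g : ι → (Ω →ₘ[μ] ℝ)` (in the a.e.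
order) with greatest lower bound `0` admits a monotone sequence of indices along which
it converges to `0` almost everywhere (countable-cofinality lemma in the proof of
Theorem 4.4 of the paper, commutative case). -/
theorem exists_monotone_seq_tendsto_ae_of_antitone_isGLB_zero
    {Ω : Type*} [MeasurableSpace Ω] {μ : Measure Ω} [SigmaFinite μ]
    {ι : Type*} [Preorder ι] [Nonempty ι] [IsDirected ι (· ≤ ·)]
    (g : ι → Ω →ₘ[μ] ℝ) (hg : Antitone g) (h0 : IsGLB (Set.range g) 0) :
    ∃ u : ℕ → ι, Monotone u ∧
      ∀ᵐ ω ∂μ, Tendsto (fun n => g (u n) ω) atTop (𝓝 0) := by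
  classical
  set ν := μ.toFinite with hν
  have hae : ae ν = ae μ := ae_toFinite
  have toν : ∀ {p : Ω → Prop}, (∀ᵐ ω ∂μ, p ω) → ∀ᵐ ω ∂ν, p ω := by
    intro p h
    show ∀ᶠ ω in ae ν, p ω
    rw [hae]; exact h
  have toμ : ∀ {p : Ω → Prop}, (∀ᵐ ω ∂ν, p ω) → ∀ᵐ ω ∂μ, p ω := by
    intro p h
    rw [show ae μ = ae ν from hae.symm]; exact h
  -- basic a.e. facts
  have hlow : ∀ i, (0 : Ω →ₘ[μ] ℝ) ≤ g i := fun i => h0.1 (Set.mem_range_self i)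
  have hpos : ∀ i, ∀ᵐ ω ∂μ, 0 ≤ g i ω := by
    intro i
    filter_upwards [AEEqFun.coeFn_le.mpr (hlow i), AEEqFun.coeFn_zero (β := ℝ) (μ := μ)]
      with ω ha hb
    rw [hb] at ha; exact ha
  have hmono : ∀ {i j : ι}, i ≤ j → ∀ᵐ ω ∂μ, g j ω ≤ g i ω :=
    fun h => AEEqFun.coeFn_le.mpr (hg h)
  -- measurability and integrability of truncations w.r.t. the finite measure ν
  have hmeasν : ∀ i, AEStronglyMeasurable (fun ω => min (g i ω) 1) ν := fun i =>
    (((g i).aemeasurable.mono_ac (toFinite_absolutelyContinuous μ)).min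
      aemeasurable_const).aestronglyMeasurable
  have hint : ∀ i, Integrable (fun ω => min (g i ω) 1) ν := by
    intro i
    refine (integrable_const (1 : ℝ)).mono' (hmeasν i) ?_
    filter_upwards [toν (hpos i)] with ω h
    rw [Real.norm_eq_abs, abs_le]
    exact ⟨by linarith [le_min h (zero_le_one (α := ℝ))], min_le_right _ _⟩
  set H : ι → ℝ := fun i => ∫ ω, min (g i ω) 1 ∂ν with hH
  have hHanti : ∀ {i j : ι}, i ≤ j → H j ≤ H i := by
    intro i j h
    refine integral_mono_ae (hint j) (hint i) ?_
    filter_upwards [toν (hmono h)] with ω hw using min_le_min hw le_rfl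
  have hH0 : ∀ i, 0 ≤ H i := by
    intro i
    refine integral_nonneg_of_ae ?_
    filter_upwards [toν (hpos i)] with ω h using le_min h zero_le_one
  have hbdd : BddBelow (Set.range H) := ⟨0, by rintro _ ⟨i, rfl⟩; exact hH0 i⟩
  set c := ⨅ i, H i with hc
  have hcle : ∀ i, c ≤ H i := fun i => ciInf_le hbdd i
  -- pick a monotone sequence of indices nearly realizing the infimum
  have hex : ∀ (n : ℕ) (i : ι), ∃ j, i ≤ j ∧ H j < c + 1 / (n + 1) := by
    intro n i
    have hlt : c < c + 1 / (n + 1) := by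
      have : (0 : ℝ) < 1 / (n + 1) := by positivity
      linarith
    obtain ⟨j, hj⟩ := exists_lt_of_ciInf_lt hlt
    obtain ⟨k, hk1, hk2⟩ := directed_of (· ≤ ·) i j
    exact ⟨k, hk1, lt_of_le_of_lt (hHanti hk2) hj⟩
  choose f hf1 hf2 using hex
  let u : ℕ → ι := fun n => Nat.rec (f 0 (Classical.arbitrary ι))
    (fun n un => f (n + 1) un) n
  have hu_succ : ∀ n, u n ≤ u (n + 1) := fun n => hf1 (n + 1) (u n)
  have humono : Monotone u := monotone_nat_of_le_succ hu_succ
  have huH : ∀ n, H (u n) < c + 1 / (n + 1) := by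
    intro n
    cases n with
    | zero => exact hf2 0 _
    | succ m => exact hf2 (m + 1) (u m)
  -- the a.e. pointwise infimum along the sequence
  set F : Ω → ℝ := fun ω => ⨅ n, min (g (u n) ω) 1 with hFdef
  have hFmeasμ : AEMeasurable F μ :=
    AEMeasurable.iInf fun n => ((g (u n)).aemeasurable).min aemeasurable_const
  have hEμ : ∀ᵐ ω ∂μ, (∀ n, 0 ≤ g (u n) ω) ∧
      ∀ n m : ℕ, n ≤ m → g (u m) ω ≤ g (u n) ω := by
    rw [eventually_and]
    constructor
    · exact ae_all_iff.mpr fun n => hpos (u n)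
    · rw [ae_all_iff]; intro n; rw [ae_all_iff]; intro m
      rcases le_or_gt n m with h | h
      · filter_upwards [hmono (humono h)] with ω hw using fun _ => hw
      · filter_upwards with ω hnm
        exact absurd hnm (not_le.mpr h)
  have htendF : ∀ᵐ ω ∂μ, Tendsto (fun n => min (g (u n) ω) 1) atTop (𝓝 (F ω)) ∧
      (∀ n, 0 ≤ min (g (u n) ω) 1) ∧ Antitone (fun n => min (g (u n) ω) 1) := by
    filter_upwards [hEμ] with ω hw
    obtain ⟨h1, h2⟩ := hw
    have hanti : Antitone fun n => min (g (u n) ω) 1 :=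
      fun n m h => min_le_min (h2 n m h) le_rfl
    have hbd : BddBelow (Set.range fun n => min (g (u n) ω) 1) :=
      ⟨0, by rintro _ ⟨n, rfl⟩; exact le_min (h1 n) zero_le_one⟩
    exact ⟨tendsto_atTop_ciInf hanti hbd, fun n => le_min (h1 n) zero_le_one, hanti⟩
  have hF01 : ∀ᵐ ω ∂μ, 0 ≤ F ω ∧ F ω ≤ 1 := by
    filter_upwards [hEμ] with ω hw
    obtain ⟨h1, h2⟩ := hw
    have hbd : BddBelow (Set.range fun n => min (g (u n) ω) 1) :=
      ⟨0, by rintro _ ⟨n, rfl⟩; exact le_min (h1 n) zero_le_one⟩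
    exact ⟨le_ciInf fun n => le_min (h1 n) zero_le_one,
      le_trans (ciInf_le hbd 0) (min_le_right _ _)⟩
  -- key step: F is a.e. below every truncation min (g i) 1
  have hkey : ∀ i, F ≤ᵐ[μ] fun ω => min (g i ω) 1 := by
    intro i
    obtain ⟨k, hk1, hk2⟩ :
        ∃ k : ℕ → ι, (∀ n, u n ≤ k n) ∧ ∀ n, i ≤ k n := by
      have := fun n => directed_of (· ≤ ·) (u n) i
      choose k h1 h2 using this
      exact ⟨k, h1, h2⟩
    set m : ℕ → Ω → ℝ := fun n ω => min (min (g (u n) ω) 1) (min (g i ω) 1) with hm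
    set ψ : ℕ → Ω → ℝ := fun n ω => min (g (u n) ω) 1 - m n ω with hψ
    have hmmeas : ∀ n, AEStronglyMeasurable (m n) ν := fun n =>
      ((hmeasν (u n)).aemeasurable.min (hmeasν i).aemeasurable).aestronglyMeasurable
    have hmint : ∀ n, Integrable (m n) ν := by
      intro n
      refine (integrable_const (1 : ℝ)).mono' (hmmeas n) ?_
      filter_upwards [toν (hpos (u n)), toν (hpos i)] with ω h1 h2
      rw [Real.norm_eq_abs, abs_le]
      constructor
      · have : (0 : ℝ) ≤ m n ω :=
          le_min (le_min h1 zero_le_one) (le_min h2 zero_le_one)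
        linarith
      · exact le_trans (min_le_left _ _) (min_le_right _ _)
    have hψint : ∀ n, Integrable (ψ n) ν := fun n => (hint (u n)).sub (hmint n)
    have hψle : ∀ n, ∫ ω, ψ n ω ∂ν ≤ 1 / (n + 1) := by
      intro n
      have h1 : ∫ ω, ψ n ω ∂ν = H (u n) - ∫ ω, m n ω ∂ν :=
        integral_sub (hint (u n)) (hmint n)
      have h2 : H (k n) ≤ ∫ ω, m n ω ∂ν := by
        refine integral_mono_ae (hint (k n)) (hmint n) ?_
        filter_upwards [toν (hmono (hk1 n)), toν (hmono (hk2 n))] with ω hw1 hw2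
        exact le_min (min_le_min hw1 le_rfl) (min_le_min hw2 le_rfl)
      have h3 : c ≤ H (k n) := hcle (k n)
      have h4 : H (u n) < c + 1 / (n + 1) := huH n
      rw [h1]; linarith
    have hψ0 : ∀ n, 0 ≤ ∫ ω, ψ n ω ∂ν := fun n =>
      integral_nonneg fun ω => sub_nonneg.mpr (min_le_left _ _)
    have hψtend : Tendsto (fun n => ∫ ω, ψ n ω ∂ν) atTop (𝓝 0) := by
      refine tendsto_of_tendsto_of_tendsto_of_le_of_le tendsto_const_nhds
        tendsto_one_div_add_atTop_nhds_zero_nat hψ0 hψle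
    set Ψ : Ω → ℝ := fun ω => F ω - min (F ω) (min (g i ω) 1) with hΨ
    have hΨtend : Tendsto (fun n => ∫ ω, ψ n ω ∂ν) atTop (𝓝 (∫ ω, Ψ ω ∂ν)) := by
      refine tendsto_integral_of_dominated_convergence (fun _ => (1 : ℝ))
        (fun n => (hψint n).aestronglyMeasurable) (integrable_const 1) ?_ ?_
      · intro n
        filter_upwards [toν (hpos (u n)), toν (hpos i)] with ω h1 h2
        have hm0 : (0 : ℝ) ≤ m n ω :=
          le_min (le_min h1 zero_le_one) (le_min h2 zero_le_one)
        have hφ1 : min (g (u n) ω) 1 ≤ 1 := min_le_right _ _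
        have hψ0' : (0 : ℝ) ≤ min (g (u n) ω) 1 - m n ω :=
          sub_nonneg.mpr (min_le_left _ _)
        rw [Real.norm_eq_abs, abs_le]
        constructor <;> simp only [ψ] <;> linarith
      · filter_upwards [toν htendF] with ω hw
        obtain ⟨htd, _, _⟩ := hw
        exact htd.sub ((htd.min tendsto_const_nhds))
    have hΨint : Integrable Ψ ν := by
      have hmeasΨ : AEStronglyMeasurable Ψ ν := by
        have hFν : AEMeasurable F ν :=
          hFmeasμ.mono_ac (toFinite_absolutelyContinuous μ)
        exact (hFν.sub (hFν.min ((hmeasν i).aemeasurable))).aestronglyMeasurable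
      refine (integrable_const (1 : ℝ)).mono' hmeasΨ ?_
      filter_upwards [toν hF01, toν (hpos i)] with ω h1 h2
      have hmin0 : (0 : ℝ) ≤ min (F ω) (min (g i ω) 1) :=
        le_min h1.1 (le_min h2 zero_le_one)
      have hΨ0 : (0 : ℝ) ≤ F ω - min (F ω) (min (g i ω) 1) :=
        sub_nonneg.mpr (min_le_left _ _)
      rw [Real.norm_eq_abs, abs_le]
      constructor <;> simp only [Ψ] <;> linarith [h1.2]
    have hΨzero : ∫ ω, Ψ ω ∂ν = 0 := tendsto_nhds_unique hΨtend hψtend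
    have hΨae : Ψ =ᵐ[ν] 0 := by
      have := (integral_eq_zero_iff_of_nonneg_ae
        (Eventually.of_forall fun ω => sub_nonneg.mpr (min_le_left _ _)) hΨint).mp hΨzero
      exact this
    have hΨaeμ : Ψ =ᵐ[μ] 0 := toμ hΨae
    filter_upwards [hΨaeμ] with ω hw
    have : F ω = min (F ω) (min (g i ω) 1) := by
      have := sub_eq_zero.mp hw
      simpa [Ψ] using this
    calc F ω = min (F ω) (min (g i ω) 1) := this
      _ ≤ min (g i ω) 1 := min_le_right _ _
  -- F is a lower bound of the net, hence a.e. zero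
  set Fae : Ω →ₘ[μ] ℝ := AEEqFun.mk F hFmeasμ.aestronglyMeasurable with hFae
  have hlb : Fae ∈ lowerBounds (Set.range g) := by
    rintro _ ⟨i, rfl⟩
    rw [← AEEqFun.coeFn_le]
    filter_upwards [hkey i, AEEqFun.coeFn_mk F hFmeasμ.aestronglyMeasurable,
      hpos i] with ω h1 h2 _
    rw [h2]
    exact le_trans h1 (min_le_left _ _)
  have hFle0 : Fae ≤ 0 := h0.2 hlb
  have hFzero : F =ᵐ[μ] 0 := by
    have h1 : (Fae : Ω → ℝ) ≤ᵐ[μ] (0 : Ω →ₘ[μ] ℝ) := AEEqFun.coeFn_le.mpr hFle0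
    filter_upwards [h1, AEEqFun.coeFn_mk F hFmeasμ.aestronglyMeasurable,
      AEEqFun.coeFn_zero (β := ℝ) (μ := μ), hF01] with ω ha hb hc hd
    rw [hb, hc] at ha
    exact le_antisymm ha hd.1
  -- conclude
  refine ⟨u, humono, ?_⟩
  filter_upwards [htendF, hFzero, hEμ] with ω hw hF0 hE
  obtain ⟨htd, hnn, hanti⟩ := hw
  obtain ⟨h1, h2⟩ := hE
  rw [hF0] at htd
  have hev : ∀ᶠ n in atTop, min (g (u n) ω) 1 < 1 :=
    htd.eventually_lt_const zero_lt_one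
  obtain ⟨N, hN⟩ := hev.exists
  have heq : ∀ᶠ n in atTop, min (g (u n) ω) 1 = g (u n) ω := by
    rw [eventually_atTop]
    refine ⟨N, fun n hn => ?_⟩
    have hgN : g (u N) ω < 1 := by
      rcases min_lt_iff.mp hN with h | h
      · exact h
      · exact absurd h (lt_irrefl 1)
    have : g (u n) ω ≤ g (u N) ω := h2 N n hn
    exact min_eq_left (le_of_lt (lt_of_le_of_lt this hgN))
  exact htd.congr' heq
end

section
/- Define f : ℕ → (ℕ → ℝ) by f n = n · χ_{{n}} (the function taking value n at the point n and 0 elsewhere). Then: (a) the sequence (f n) order-converges to 0 in ℝ^ℕ, i.e., there exists an antitone sequence R : ℕ → (ℕ → ℝ) with R k → 0 pointwise as k → ∞ and f n ≤ R n pointwise for every n; but (b) for every strictly monotone φ : ℕ → ℕ there is no bounded function g : ℕ → ℝ with f (φ k) ≤ g pointwise for all k, i.e., no subsequence of (f n) is order bounded in ℓ∞. -/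
open Filter Topology

/-- The sequence `f n = n · χ_{{n}}` in `ℝ^ℕ` order-converges to `0` (it is dominated
by an antitone sequence tending to `0` pointwise), yet no subsequence of it is
dominated by a bounded function (the example of Section 3 of the paper, with
`M = ℓ∞(ℂ)` and the summation trace). -/
theorem order_converges_but_no_bounded_dominated_subsequence
    (f : ℕ → ℕ → ℝ) (hf : ∀ n m, f n m = if m = n then (n : ℝ) else 0) :
    (∃ R : ℕ → ℕ → ℝ, Antitone R ∧
        (∀ m, Tendsto (fun k => R k m) atTop (𝓝 0)) ∧
        (∀ n, f n ≤ R n)) ∧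
      ∀ φ : ℕ → ℕ, StrictMono φ →
        ¬ ∃ g : ℕ → ℝ, (∃ C : ℝ, ∀ m, |g m| ≤ C) ∧ ∀ k, f (φ k) ≤ g := by
  constructor
  · refine ⟨fun k m => if k ≤ m then (m : ℝ) else 0, ?_, ?_, ?_⟩
    · intro k k' hk m
      by_cases h : k' ≤ m
      · simp [h, le_trans hk h]
      · simp [h]
        split <;> positivity
    · intro m
      refine tendsto_atTop_of_eventually_const (i₀ := m + 1) fun k hk => ?_
      have : ¬ k ≤ m := by omega
      simp [this]
    · intro n m
      rw [hf]
      split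
      · subst ‹m = n›; simp
      · dsimp only; split <;> positivity
  · rintro φ hφ ⟨g, ⟨C, hC⟩, hg⟩
    obtain ⟨n, hn⟩ := exists_nat_gt C
    have h1 : f (φ n) (φ n) ≤ g (φ n) := hg n (φ n)
    rw [hf] at h1
    simp at h1
    have h2 : (n : ℝ) ≤ (φ n : ℝ) := Nat.cast_le.2 (hφ.le_apply)
    have h3 := (hC (φ n))
    have := abs_le.1 h3
    linarith
end
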